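/- arXiv:2403.18670 — 2 statements merged into one kernel-verified Lean document; each statement's English description precedes it below -/
import Mathlib

section
/- Let C ⊆ ℝ^d be a closed cone, κ ∈ ℝ^d, and Λ ⊆ (ℤ^d + κ) ∩ C. Let 𝚍 > 0 and let h_L : ℝ^d → ℝ be continuous and homogeneous of degree 𝚍 at infinity, i.e. there exists R > 0 such that h_L(λa) = λ^𝚍 h_L(a) for all λ > 1 and all ‖a‖ ≥ R. Assume moreover that h_L(a) > 0 for every a ∈ C with ‖a‖ ≥ R. Then there exists a constant C' > 0 such that for every E ≥ 1 the cardinality of the set {a ∈ Λ : h_L(a) ≤ E} is at most C' E^{d/𝚍}. -/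
lemma coord_le_norm {d : ℕ} (x : EuclideanSpace ℝ (Fin d)) (i : Fin d) : |x i| ≤ ‖x‖ := by
  rw [EuclideanSpace.norm_eq]
  have h1 : |x i| = Real.sqrt (x i ^ 2) := by
    rw [Real.sqrt_sq_eq_abs]
  rw [h1]
  apply Real.sqrt_le_sqrt
  have := Finset.single_le_sum (f := fun j => x j ^ 2) (fun j _ => sq_nonneg (x j))
    (Finset.mem_univ i)
  simpa [sq_abs] using this

lemma lattice_count {d : ℕ} (κ : EuclideanSpace ℝ (Fin d)) (r : ℝ) (hr : 0 ≤ r) :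
    ∃ hfin : {x : EuclideanSpace ℝ (Fin d) |
      (∃ k : Fin d → ℤ, ∀ i, x i = (k i : ℝ) + κ i) ∧ ‖x‖ ≤ r}.Finite,
      (hfin.toFinset.card : ℝ) ≤ (2 * (r + ‖κ‖) + 1) ^ d := by
  classical
  set N : ℤ := ⌊r + ‖κ‖⌋ with hN
  have hN0 : 0 ≤ N := Int.le_floor.2 (by simpa using add_nonneg hr (norm_nonneg κ))
  set B : Finset (Fin d → ℤ) := Finset.Icc (fun _ => -N) (fun _ => N) with hB
  set img : Finset (EuclideanSpace ℝ (Fin d)) :=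
    B.image (fun k => (WithLp.equiv 2 (Fin d → ℝ)).symm (fun i => (k i : ℝ) + κ i)) with himg
  have hsub : {x : EuclideanSpace ℝ (Fin d) |
      (∃ k : Fin d → ℤ, ∀ i, x i = (k i : ℝ) + κ i) ∧ ‖x‖ ≤ r} ⊆ ↑img := by
    rintro x ⟨⟨k, hk⟩, hxr⟩
    simp only [himg, Finset.coe_image, Set.mem_image, Finset.mem_coe]
    refine ⟨k, ?_, ?_⟩
    · simp only [hB, Finset.mem_Icc]
      constructor <;> intro i <;> simp only [Pi.natCast_def] <;>
      · have h1 : |x i| ≤ r := (coord_le_norm x i).trans hxr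
        have h2 : |κ i| ≤ ‖κ‖ := coord_le_norm κ i
        have hki : |(k i : ℝ)| ≤ r + ‖κ‖ := by
          have : (k i : ℝ) = x i - κ i := by rw [hk i]; ring
          rw [this]
          calc |x i - κ i| ≤ |x i| + |κ i| := abs_sub _ _
            _ ≤ r + ‖κ‖ := add_le_add h1 h2
        rw [abs_le] at hki
        first
        | exact Int.le_floor.2 hki.2
        | · have h3 : (-(k i) : ℤ) ≤ N := Int.le_floor.2 (by push_cast; linarith [hki.1])
            omega
    · apply PiLp.ext
      intro i
      simp [hk i]
  refine ⟨Set.Finite.subset img.finite_toSet hsub, ?_⟩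
  have hc1 : (Set.Finite.subset img.finite_toSet hsub).toFinset.card ≤ img.card := by
    apply Finset.card_le_card
    rw [Set.Finite.toFinset_subset]
    exact hsub
  have hc2 : img.card ≤ B.card := Finset.card_image_le
  have hc3 : B.card = ((2 * N + 1).toNat) ^ d := by
    rw [hB, Pi.card_Icc]
    simp [Int.card_Icc]
    congr 1
    omega
  have h2N : ((2 * N + 1).toNat : ℝ) ≤ 2 * (r + ‖κ‖) + 1 := by
    have : (N : ℝ) ≤ r + ‖κ‖ := Int.floor_le _
    have h' : ((2 * N + 1).toNat : ℤ) = 2 * N + 1 := Int.toNat_of_nonneg (by omega)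
    have : (((2 * N + 1).toNat : ℤ) : ℝ) ≤ 2 * (r + ‖κ‖) + 1 := by
      rw [h']; push_cast; linarith
    exact_mod_cast this
  calc ((Set.Finite.subset img.finite_toSet hsub).toFinset.card : ℝ)
      ≤ (B.card : ℝ) := by exact_mod_cast le_trans hc1 hc2
    _ = ((2 * N + 1).toNat : ℝ) ^ d := by rw [hc3]; push_cast; ring
    _ ≤ (2 * (r + ‖κ‖) + 1) ^ d := by
        apply pow_le_pow_left₀ (by positivity) h2N



lemma norm_bound {d : ℕ}
    (C : Set (EuclideanSpace ℝ (Fin d))) (hCclosed : IsClosed C)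
    (hCcone : ∀ x ∈ C, ∀ t : ℝ, 0 ≤ t → t • x ∈ C)
    (dd : ℝ) (hdd : 0 < dd)
    (hL : EuclideanSpace ℝ (Fin d) → ℝ) (hLcont : Continuous hL)
    (R : ℝ) (hR : 0 < R)
    (hhom : ∀ a : EuclideanSpace ℝ (Fin d), R ≤ ‖a‖ →
      ∀ lam : ℝ, 1 < lam → hL (lam • a) = lam ^ dd * hL a)
    (hpos : ∀ a ∈ C, R ≤ ‖a‖ → 0 < hL a) :
    ∃ c > (0:ℝ), ∀ E : ℝ, 1 ≤ E → ∀ a ∈ C, hL a ≤ E → ‖a‖ ≤ c * E ^ (1/dd) := by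
  by_cases hne : (C ∩ Metric.sphere 0 (2*R)).Nonempty
  · obtain ⟨b₀, hb₀K, hb₀min⟩ :=
      ((isCompact_sphere (0 : EuclideanSpace ℝ (Fin d)) (2*R)).inter_left
        hCclosed).exists_isMinOn hne hLcont.continuousOn
    set m := hL b₀ with hmdef
    have hb₀norm : ‖b₀‖ = 2*R := by
      simpa [mem_sphere_zero_iff_norm] using hb₀K.2
    have hm : 0 < m := hpos b₀ hb₀K.1 (by rw [hb₀norm]; linarith)
    set c := max (2*R) (2*R * (1/m) ^ (1/dd)) with hc
    refine ⟨c, lt_of_lt_of_le (by linarith) (le_max_left _ _), fun E hE a haC haE => ?_⟩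
    have hE0 : (0:ℝ) ≤ E := by linarith
    have hE1 : (1:ℝ) ≤ E ^ (1/dd) := Real.one_le_rpow hE (by positivity)
    have hc0 : 0 ≤ c := le_trans (by linarith) (le_max_left _ _)
    by_cases hnorm : ‖a‖ ≤ 2*R
    · calc ‖a‖ ≤ 2*R := hnorm
        _ = 2*R * 1 := by ring
        _ ≤ c * E ^ (1/dd) :=
            mul_le_mul (le_max_left _ _) hE1 zero_le_one hc0
    · push_neg at hnorm
      set lam := ‖a‖ / (2*R) with hlam
      have hlam1 : 1 < lam := (one_lt_div (by linarith)).2 hnorm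
      have hlam0 : (0:ℝ) < lam := by linarith
      set b := lam⁻¹ • a with hb
      have hbC : b ∈ C := hCcone a haC _ (by positivity)
      have hbnorm : ‖b‖ = 2*R := by
        rw [hb, norm_smul, norm_inv, Real.norm_eq_abs, abs_of_pos hlam0, hlam,
          inv_div, div_mul_cancel₀ _ (ne_of_gt (by linarith : (0:ℝ) < ‖a‖))]
      have hab : lam • b = a := by
        rw [hb, smul_smul]
        rw [mul_inv_cancel₀ (ne_of_gt hlam0), one_smul]
      have hbK : b ∈ C ∩ Metric.sphere 0 (2*R) := ⟨hbC, by
        simpa [mem_sphere_zero_iff_norm] using hbnorm⟩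
      have hmb : m ≤ hL b := hb₀min hbK
      have hhla : hL a = lam ^ dd * hL b := by
        rw [← hab]
        exact hhom b (by rw [hbnorm]; linarith) lam hlam1
      have hkey : m * lam ^ dd ≤ E := by
        calc m * lam ^ dd ≤ hL b * lam ^ dd := by
              apply mul_le_mul_of_nonneg_right hmb (Real.rpow_nonneg hlam0.le _)
          _ = hL a := by rw [hhla]; ring
          _ ≤ E := haE
      have hlampow : lam ^ dd ≤ E / m := (le_div_iff₀ hm).2 (by linarith)
      have hlamle : lam ≤ (E / m) ^ (1/dd) := by
        have h1 := Real.rpow_le_rpow (Real.rpow_nonneg hlam0.le dd) hlampow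
          (by positivity : (0:ℝ) ≤ 1/dd)
        rwa [← Real.rpow_mul hlam0.le, mul_one_div, div_self (ne_of_gt hdd),
          Real.rpow_one] at h1
      have hsplit : (E / m) ^ ((1:ℝ)/dd) = (1/m) ^ ((1:ℝ)/dd) * E ^ ((1:ℝ)/dd) := by
        rw [div_eq_mul_inv, ← one_div, Real.mul_rpow hE0 (by positivity), mul_comm]
      calc ‖a‖ = 2*R * lam := by rw [hlam]; field_simp
        _ ≤ 2*R * ((E/m) ^ (1/dd)) := by
            apply mul_le_mul_of_nonneg_left hlamle (by linarith)
        _ = (2*R * (1/m) ^ (1/dd)) * E ^ (1/dd) := by rw [hsplit]; ring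
        _ ≤ c * E ^ (1/dd) := by
            apply mul_le_mul_of_nonneg_right (le_max_right _ _) (by positivity)
  · refine ⟨1, one_pos, fun E hE a haC _ => ?_⟩
    have ha0 : a = 0 := by
      by_contra h
      have hna : (0:ℝ) < ‖a‖ := norm_pos_iff.2 h
      refine hne ⟨(2*R/‖a‖) • a, hCcone a haC _ (by positivity), ?_⟩
      rw [mem_sphere_zero_iff_norm, norm_smul, Real.norm_eq_abs,
        abs_of_pos (by positivity)]
      field_simp
    rw [ha0, norm_zero, one_mul]
    positivity



/-- Counting estimate for the eigenvalues of a globally integrable quantum system: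
if `Λ ⊆ (ℤ^d + κ) ∩ C` and `h_L` is continuous, homogeneous of degree `dd > 0` at infinity
and positive on the cone `C` at infinity, then the number of points `a ∈ Λ` with
`h_L(a) ≤ E` is bounded by `C' E^{d/dd}` for all `E ≥ 1`. -/
theorem counting_estimate {d : ℕ}
    (C : Set (EuclideanSpace ℝ (Fin d))) (hCclosed : IsClosed C)
    (hCcone : ∀ x ∈ C, ∀ t : ℝ, 0 ≤ t → t • x ∈ C)
    (κ : EuclideanSpace ℝ (Fin d))
    (Λ : Set (EuclideanSpace ℝ (Fin d)))
    (hΛ : Λ ⊆ {x : EuclideanSpace ℝ (Fin d) |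
      ∃ k : Fin d → ℤ, ∀ i, x i = (k i : ℝ) + κ i} ∩ C)
    (dd : ℝ) (hdd : 0 < dd)
    (hL : EuclideanSpace ℝ (Fin d) → ℝ) (hLcont : Continuous hL)
    (R : ℝ) (hR : 0 < R)
    (hhom : ∀ a : EuclideanSpace ℝ (Fin d), R ≤ ‖a‖ →
      ∀ lam : ℝ, 1 < lam → hL (lam • a) = lam ^ dd * hL a)
    (hpos : ∀ a ∈ C, R ≤ ‖a‖ → 0 < hL a) :
    ∃ C' > (0 : ℝ), ∀ E : ℝ, 1 ≤ E →
      ∃ hfin : {a ∈ Λ | hL a ≤ E}.Finite,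
        (hfin.toFinset.card : ℝ) ≤ C' * E ^ ((d : ℝ) / dd) := by
  obtain ⟨c, hc0, hc⟩ := norm_bound C hCclosed hCcone dd hdd hL hLcont R hR hhom hpos
  refine ⟨(2 * (c + ‖κ‖) + 1) ^ d, by positivity, fun E hE => ?_⟩
  have hE0 : (0:ℝ) ≤ E := by linarith
  have hE1 : (1:ℝ) ≤ E ^ ((1:ℝ)/dd) := Real.one_le_rpow hE (by positivity)
  set r := c * E ^ ((1:ℝ)/dd) with hr
  have hr0 : 0 ≤ r := by positivity
  obtain ⟨hfin, hcard⟩ := lattice_count κ r hr0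
  have hsub : {a ∈ Λ | hL a ≤ E} ⊆ {x : EuclideanSpace ℝ (Fin d) |
      (∃ k : Fin d → ℤ, ∀ i, x i = (k i : ℝ) + κ i) ∧ ‖x‖ ≤ r} := by
    rintro a ⟨haΛ, haE⟩
    obtain ⟨hk, haC⟩ := hΛ haΛ
    exact ⟨hk, hc E hE a haC haE⟩
  refine ⟨hfin.subset hsub, ?_⟩
  have h1 : ((hfin.subset hsub).toFinset.card : ℝ) ≤ (hfin.toFinset.card : ℝ) := by
    exact_mod_cast Finset.card_le_card (by
      rw [Set.Finite.toFinset_subset, Set.Finite.coe_toFinset]; exact hsub)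
  have h2 : 2 * (r + ‖κ‖) + 1 ≤ (2 * (c + ‖κ‖) + 1) * E ^ ((1:ℝ)/dd) := by
    have hκ : (0:ℝ) ≤ ‖κ‖ := norm_nonneg κ
    have : (2 * ‖κ‖ + 1) * 1 ≤ (2 * ‖κ‖ + 1) * E ^ ((1:ℝ)/dd) :=
      mul_le_mul_of_nonneg_left hE1 (by linarith)
    rw [hr]; nlinarith
  have h3 : ((2 * (c + ‖κ‖) + 1) * E ^ ((1:ℝ)/dd)) ^ d
      = (2 * (c + ‖κ‖) + 1) ^ d * E ^ ((d:ℝ)/dd) := by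
    rw [mul_pow]
    congr 1
    rw [← Real.rpow_natCast (E ^ ((1:ℝ)/dd)) d, ← Real.rpow_mul hE0]
    congr 1
    field_simp
  calc ((hfin.subset hsub).toFinset.card : ℝ)
      ≤ (hfin.toFinset.card : ℝ) := h1
    _ ≤ (2 * (r + ‖κ‖) + 1) ^ d := hcard
    _ ≤ ((2 * (c + ‖κ‖) + 1) * E ^ ((1:ℝ)/dd)) ^ d :=
        pow_le_pow_left₀ (by positivity) h2 d
    _ = (2 * (c + ‖κ‖) + 1) ^ d * E ^ ((d:ℝ)/dd) := h3
end

section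
/- Fix an integer ℓ ≥ 1, let a_1(E, M) be the modified radial action of the two-dimensional anharmonic oscillator (extended analytically to the region Ω := {(E, M) : E > 0, |M| < ((2ℓ/(ℓ+1)) E)^{(ℓ+1)/(2ℓ)}}), and define the cone 𝒞 := {(a_1, a_2) ∈ ℝ² : a_1 ≥ 0 if a_2 ≥ 0, and a_1 ≥ |a_2| if a_2 < 0}. Then the map (E, M) ↦ (a_1(E, M), M) sends Ω into the interior of 𝒞, and there exists a function h, real analytic on the interior of 𝒞 and homogeneous of degree 2ℓ/(ℓ+1) there (i.e. h(λ a) = λ^{2ℓ/(ℓ+1)} h(a) for all λ > 0 and all a in the interior of 𝒞), such that h(a_1(E, M), M) = E for all (E, M) ∈ Ω. -/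
/-- The effective radial potential of the two-dimensional anharmonic oscillator at angular
momentum `M`: `V*_M(r) = M²/(2r²) + r^{2ℓ}/(2ℓ)`. -/
noncomputable def Vstar (ℓ : ℕ) (M r : ℝ) : ℝ :=
  M ^ 2 / (2 * r ^ 2) + r ^ (2 * ℓ) / (2 * ℓ)

/-- The inner turning point `r_m` of the radial motion at energy `E` and angular
momentum `M` (equal to `0` when `M = 0`). -/
noncomputable def rmin (ℓ : ℕ) (E M : ℝ) : ℝ :=
  sInf {r : ℝ | 0 < r ∧ Vstar ℓ M r ≤ E}

/-- The outer turning point `r_M` of the radial motion at energy `E` and angular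
momentum `M`. -/
noncomputable def rmax (ℓ : ℕ) (E M : ℝ) : ℝ :=
  sSup {r : ℝ | 0 < r ∧ Vstar ℓ M r ≤ E}

/-- The radial action `a_r(E, M) = (√2/π) ∫_{r_m}^{r_M} √(E − V*_M(r)) dr` of the
two-dimensional anharmonic oscillator. -/
noncomputable def radialAction (ℓ : ℕ) (E M : ℝ) : ℝ :=
  (Real.sqrt 2 / Real.pi) * ∫ r in (rmin ℓ E M)..(rmax ℓ E M), Real.sqrt (E - Vstar ℓ M r)

/-- The region `Ω = {(E, M) : E > 0, |M| < ((2ℓ/(ℓ+1)) E)^{(ℓ+1)/(2ℓ)}}` where the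
action variables of the anharmonic oscillator are defined. -/
def OmegaRegion (ℓ : ℕ) : Set (ℝ × ℝ) :=
  {p : ℝ × ℝ | 0 < p.1 ∧
    |p.2| < (2 * (ℓ : ℝ) / (ℓ + 1) * p.1) ^ (((ℓ : ℝ) + 1) / (2 * ℓ))}

/-- The cone `𝒞 = {(a₁, a₂) : a₁ ≥ 0 if a₂ ≥ 0, a₁ ≥ |a₂| if a₂ < 0}`. -/
def actionCone : Set (ℝ × ℝ) :=
  {a : ℝ × ℝ | (0 ≤ a.2 → 0 ≤ a.1) ∧ (a.2 < 0 → |a.2| ≤ a.1)}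

set_option linter.unusedSectionVars false


namespace AHO

open Real Set intervalIntegral

/-- the value of `Vstar` at its minimum point. -/
noncomputable def Vm (ℓ : ℕ) (M : ℝ) : ℝ :=
  (((ℓ:ℝ)+1)/(2*ℓ)) * |M| ^ ((2*(ℓ:ℝ))/((ℓ:ℝ)+1))

def Sset (ℓ : ℕ) (E M : ℝ) : Set ℝ := {r : ℝ | 0 < r ∧ Vstar ℓ M r ≤ E}

variable {ℓ : ℕ} {E M t u v c r : ℝ}

lemma rmin_eq (ℓ : ℕ) (E M : ℝ) : rmin ℓ E M = sInf (Sset ℓ E M) := rfl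
lemma rmax_eq (ℓ : ℕ) (E M : ℝ) : rmax ℓ E M = sSup (Sset ℓ E M) := rfl

section casts
variable (hℓ : 1 ≤ ℓ)
include hℓ

lemma lpos : (0:ℝ) < (ℓ:ℝ) := by exact_mod_cast Nat.pos_of_ne_zero (by omega)
lemma l1pos : (0:ℝ) < (ℓ:ℝ) + 1 := by positivity
lemma two_l_pos : (0:ℝ) < 2*(ℓ:ℝ) := by have := lpos hℓ; linarith
lemma gamma_pos : (0:ℝ) < (2*(ℓ:ℝ))/((ℓ:ℝ)+1) := by
  have := lpos hℓ; positivity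
lemma one_le_gamma : (1:ℝ) ≤ (2*(ℓ:ℝ))/((ℓ:ℝ)+1) := by
  have h := lpos hℓ
  rw [le_div_iff₀ (by linarith)]
  have : (1:ℝ) ≤ (ℓ:ℝ) := by exact_mod_cast hℓ
  linarith
lemma beta_pos : (0:ℝ) < ((ℓ:ℝ)+1)/(2*(ℓ:ℝ)) := by have := lpos hℓ; positivity
lemma beta_mul_gamma : (((ℓ:ℝ)+1)/(2*(ℓ:ℝ))) * ((2*(ℓ:ℝ))/((ℓ:ℝ)+1)) = 1 := by
  have := lpos hℓ; field_simp

end casts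

lemma Vm_nonneg (hℓ : 1 ≤ ℓ) (M : ℝ) : 0 ≤ Vm ℓ M := by
  have := lpos hℓ
  unfold Vm
  positivity

lemma Vm_zero (hℓ : 1 ≤ ℓ) : Vm ℓ 0 = 0 := by
  unfold Vm
  rw [abs_zero, Real.zero_rpow (ne_of_gt (gamma_pos hℓ)), mul_zero]

lemma Vm_mono (hℓ : 1 ≤ ℓ) {M M' : ℝ} (h : |M| ≤ |M'|) : Vm ℓ M ≤ Vm ℓ M' := by
  have h1 := lpos hℓ
  unfold Vm
  have := Real.rpow_le_rpow (abs_nonneg M) h (le_of_lt (gamma_pos hℓ))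
  have hc : (0:ℝ) ≤ ((ℓ:ℝ)+1)/(2*ℓ) := by positivity
  exact mul_le_mul_of_nonneg_left this hc

lemma Vstar_nonneg (hℓ : 1 ≤ ℓ) (M : ℝ) {r : ℝ} (hr : 0 < r) : 0 ≤ Vstar ℓ M r := by
  have := lpos hℓ
  unfold Vstar
  positivity

/-- AM–GM : the potential is bounded below by its minimum value. -/
lemma Vm_le_Vstar (hℓ : 1 ≤ ℓ) (M : ℝ) {r : ℝ} (hr : 0 < r) : Vm ℓ M ≤ Vstar ℓ M r := by
  have hl := lpos hℓ
  rcases eq_or_ne M 0 with hM | hM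
  · rw [hM, Vm_zero hℓ]
    exact Vstar_nonneg hℓ 0 hr
  · have habs : 0 < |M| := abs_pos.mpr hM
    set w₁ : ℝ := 1/((ℓ:ℝ)+1) with hw₁
    set w₂ : ℝ := (ℓ:ℝ)/((ℓ:ℝ)+1) with hw₂
    set p₁ : ℝ := r^(2*ℓ) with hp₁
    set p₂ : ℝ := M^2/r^2 with hp₂
    have hw : w₁ + w₂ = 1 := by
      rw [hw₁, hw₂, ← add_div]
      rw [add_comm (1:ℝ)]
      exact div_self (by positivity)
    have hgm := Real.geom_mean_le_arith_mean2_weighted (w₁ := w₁) (w₂ := w₂) (p₁ := p₁)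
      (p₂ := p₂) (by positivity) (by positivity) (by positivity) (by positivity) hw
    set γ : ℝ := (2*(ℓ:ℝ))/((ℓ:ℝ)+1) with hγ
    have e1 : p₁ ^ w₁ = r ^ γ := by
      rw [hp₁, ← Real.rpow_natCast r (2*ℓ), ← Real.rpow_mul hr.le]
      congr 1
      rw [hw₁, hγ]
      push_cast
      ring
    have e2 : p₂ ^ w₂ = |M| ^ γ / r ^ γ := by
      rw [hp₂, Real.div_rpow (by positivity) (by positivity)]
      congr 1
      · rw [← sq_abs, ← Real.rpow_natCast |M| 2, ← Real.rpow_mul (abs_nonneg M)]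
        congr 1
        rw [hw₂, hγ]
        push_cast
        ring
      · rw [← Real.rpow_natCast r 2, ← Real.rpow_mul hr.le]
        congr 1
        rw [hw₂, hγ]
        push_cast
        ring
    have hrγ : (0:ℝ) < r ^ γ := Real.rpow_pos_of_pos hr _
    have e3 : p₁ ^ w₁ * p₂ ^ w₂ = |M| ^ γ := by
      rw [e1, e2]
      field_simp
    have e4 : Vstar ℓ M r = (((ℓ:ℝ)+1)/(2*ℓ)) * (w₁ * p₁ + w₂ * p₂) := by
      rw [hw₁, hw₂, hp₁, hp₂]
      unfold Vstar
      have hr2 : r^2 ≠ 0 := by positivity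
      field_simp
      ring
    rw [e4]
    unfold Vm
    rw [← hγ, ← e3]
    have hc : (0:ℝ) ≤ ((ℓ:ℝ)+1)/(2*ℓ) := by positivity
    exact mul_le_mul_of_nonneg_left hgm hc

end AHO


namespace AHO

open Real Set intervalIntegral

variable {ℓ : ℕ} {E M t u v c r : ℝ}

/-- characterization of the region `Ω`. -/
lemma omega_iff (hℓ : 1 ≤ ℓ) (p : ℝ × ℝ) :
    p ∈ OmegaRegion ℓ ↔ 0 < p.1 ∧ Vm ℓ p.2 < p.1 := by
  obtain ⟨E, M⟩ := p
  have hl := lpos hℓ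
  have hco : (0:ℝ) < ((ℓ:ℝ)+1)/(2*ℓ) := beta_pos hℓ
  simp only [OmegaRegion, Set.mem_setOf_eq, Vm]
  constructor
  · rintro ⟨hE, hM⟩
    refine ⟨hE, ?_⟩
    have hX : (0:ℝ) < 2 * (ℓ:ℝ) / ((ℓ:ℝ) + 1) * E := by positivity
    have h2 : |M| ^ ((2*(ℓ:ℝ))/((ℓ:ℝ)+1)) < 2 * (ℓ:ℝ) / ((ℓ:ℝ) + 1) * E := by
      have h3 := Real.rpow_lt_rpow (abs_nonneg M) hM (gamma_pos hℓ)
      rwa [← Real.rpow_mul hX.le, beta_mul_gamma hℓ, Real.rpow_one] at h3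
    calc ((ℓ:ℝ)+1)/(2*ℓ) * |M| ^ ((2*(ℓ:ℝ))/((ℓ:ℝ)+1))
        < ((ℓ:ℝ)+1)/(2*ℓ) * (2 * (ℓ:ℝ) / ((ℓ:ℝ) + 1) * E) := by
          exact mul_lt_mul_of_pos_left h2 hco
      _ = E := by field_simp
  · rintro ⟨hE, hM⟩
    refine ⟨hE, ?_⟩
    have h2 : |M| ^ ((2*(ℓ:ℝ))/((ℓ:ℝ)+1)) < 2 * (ℓ:ℝ) / ((ℓ:ℝ) + 1) * E := by
      rw [← lt_div_iff₀' hco] at hM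
      calc |M| ^ ((2*(ℓ:ℝ))/((ℓ:ℝ)+1)) < E / (((ℓ:ℝ)+1)/(2*ℓ)) := hM
        _ = 2 * (ℓ:ℝ) / ((ℓ:ℝ) + 1) * E := by field_simp
    have h3 := Real.rpow_lt_rpow (Real.rpow_nonneg (abs_nonneg M) _) h2 (beta_pos hℓ)
    rwa [← Real.rpow_mul (abs_nonneg M), mul_comm ((2*(ℓ:ℝ))/((ℓ:ℝ)+1)), beta_mul_gamma hℓ,
      Real.rpow_one] at h3

/-- small angular momenta keep `Vm` below a fixed energy. -/
lemma exists_M0 (hℓ : 1 ≤ ℓ) (hE : 0 < E) :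
    ∃ M₀ : ℝ, 0 < M₀ ∧ ∀ M' : ℝ, |M'| ≤ M₀ → Vm ℓ M' < E := by
  have hl := lpos hℓ
  have hco : (0:ℝ) < ((ℓ:ℝ)+1)/(2*ℓ) := beta_pos hℓ
  set co : ℝ := ((ℓ:ℝ)+1)/(2*ℓ) with hcodef
  refine ⟨min 1 (E/(2*co)), by positivity, fun M' hM' => ?_⟩
  set γ : ℝ := (2*(ℓ:ℝ))/((ℓ:ℝ)+1) with hγ
  have hM₀1 : min 1 (E/(2*co)) ≤ 1 := min_le_left _ _
  have hM₀pos : (0:ℝ) < min 1 (E/(2*co)) := by positivity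
  have h1 : |M'| ^ γ ≤ (min 1 (E/(2*co))) ^ γ :=
    Real.rpow_le_rpow (abs_nonneg M') hM' (gamma_pos hℓ).le
  have h2 : (min 1 (E/(2*co))) ^ γ ≤ (min 1 (E/(2*co))) ^ (1:ℝ) :=
    Real.rpow_le_rpow_of_exponent_ge hM₀pos hM₀1 (one_le_gamma hℓ)
  have h3 : |M'| ^ γ ≤ E/(2*co) := by
    rw [Real.rpow_one] at h2
    exact (h1.trans h2).trans (min_le_right _ _)
  have : Vm ℓ M' ≤ co * (E/(2*co)) := by
    unfold Vm
    exact mul_le_mul_of_nonneg_left h3 hco.le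
  calc Vm ℓ M' ≤ co * (E/(2*co)) := this
    _ = E/2 := by field_simp
    _ < E := by linarith

section turning

variable (hℓ : 1 ≤ ℓ) (hE : 0 < E) (hM : M ≠ 0) (hVm : Vm ℓ M < E)

omit hE hVm in
include hℓ hM in
/-- the value of the potential at the minimum point. -/
lemma Vstar_r0 : Vstar ℓ M (|M| ^ (1/((ℓ:ℝ)+1))) = Vm ℓ M := by
  have hl := lpos hℓ
  have habs : 0 < |M| := abs_pos.mpr hM
  set r₀ : ℝ := |M| ^ (1/((ℓ:ℝ)+1)) with hr₀
  have hr₀pos : 0 < r₀ := Real.rpow_pos_of_pos habs _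
  set γ : ℝ := (2*(ℓ:ℝ))/((ℓ:ℝ)+1) with hγ
  have e1 : r₀ ^ (2*ℓ) = |M| ^ γ := by
    rw [hr₀, ← Real.rpow_natCast (|M| ^ (1/((ℓ:ℝ)+1))) (2*ℓ), ← Real.rpow_mul (abs_nonneg M)]
    congr 1
    rw [hγ]
    push_cast
    field_simp
  have e2 : M^2 / (2*r₀^2) = |M| ^ γ / 2 := by
    have h2 : r₀ ^ 2 = |M| ^ (2/((ℓ:ℝ)+1)) := by
      rw [hr₀, ← Real.rpow_natCast (|M| ^ (1/((ℓ:ℝ)+1))) 2, ← Real.rpow_mul (abs_nonneg M)]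
      congr 1
      push_cast
      ring
    have h3 : M^2 = |M| ^ (2:ℝ) := by
      rw [← sq_abs M, show ((2:ℝ)) = ((2:ℕ):ℝ) by norm_num, Real.rpow_natCast]
    have key : |M| ^ (2:ℝ) = |M| ^ γ * |M| ^ (2/((ℓ:ℝ)+1)) := by
      rw [← Real.rpow_add habs]
      congr 1
      rw [hγ]
      field_simp
    have hne : |M| ^ (2/((ℓ:ℝ)+1)) ≠ 0 := ne_of_gt (Real.rpow_pos_of_pos habs _)
    rw [h2, h3, key]
    field_simp
  unfold Vstar Vm
  rw [e1, e2, ← hγ]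
  field_simp

include hℓ hE hM hVm in
/-- the minimum point of the potential belongs to the allowed region. -/
lemma r0_mem : |M| ^ (1/((ℓ:ℝ)+1)) ∈ Sset ℓ E M :=
  ⟨Real.rpow_pos_of_pos (abs_pos.mpr hM) _, by rw [Vstar_r0 hℓ hM]; exact hVm.le⟩

omit hE hM hVm in
include hℓ in
lemma mem_le_Rtop (hr : r ∈ Sset ℓ E M) : r ≤ (2*(ℓ:ℝ)*E) ^ (1/(2*(ℓ:ℝ))) := by
  have hl := lpos hℓ
  obtain ⟨hrpos, hrV⟩ := hr
  have h1 : r ^ (2*ℓ) / (2*(ℓ:ℝ)) ≤ E := by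
    have h0 : 0 ≤ M^2/(2*r^2) := by positivity
    unfold Vstar at hrV
    linarith
  have h2 : r ^ (2*ℓ) ≤ 2*(ℓ:ℝ)*E := by
    rw [div_le_iff₀ (by positivity)] at h1
    linarith [h1]
  have h3 := Real.rpow_le_rpow (by positivity : (0:ℝ) ≤ r ^ (2*ℓ)) h2
    (by positivity : (0:ℝ) ≤ 1/(2*(ℓ:ℝ)))
  rwa [← Real.rpow_natCast r (2*ℓ), ← Real.rpow_mul hrpos.le,
    (by push_cast; field_simp : ((2*ℓ : ℕ):ℝ) * (1/(2*(ℓ:ℝ))) = 1), Real.rpow_one] at h3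

omit hℓ hM hVm in
include hE in
lemma rlow_le_mem (hr : r ∈ Sset ℓ E M) : |M| / Real.sqrt (2*E) ≤ r := by
  obtain ⟨hrpos, hrV⟩ := hr
  have h1 : M^2/(2*r^2) ≤ E := by
    have h0 : 0 ≤ r ^ (2*ℓ) / (2*(ℓ:ℝ)) := by positivity
    unfold Vstar at hrV
    linarith
  have h2 : M^2 ≤ 2*E*r^2 := by
    rw [div_le_iff₀ (by positivity)] at h1
    linarith
  have h3 : |M| ≤ Real.sqrt (2*E) * r := by
    have := Real.sqrt_le_sqrt h2
    rwa [Real.sqrt_sq_eq_abs, (by ring : 2*E*r^2 = (2*E)*r^2),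
      Real.sqrt_mul (by positivity) (r^2), Real.sqrt_sq hrpos.le] at this
  rw [div_le_iff₀ (by positivity)]
  linarith [h3]

include hℓ hE hM hVm

lemma Sset_nonempty : (Sset ℓ E M).Nonempty := ⟨_, r0_mem hℓ hE hM hVm⟩

lemma Sset_bddAbove : BddAbove (Sset ℓ E M) := ⟨_, fun _ hr => mem_le_Rtop hℓ hr⟩

lemma Sset_bddBelow : BddBelow (Sset ℓ E M) := ⟨0, fun _ hr => hr.1.le⟩

lemma rmin_pos : 0 < rmin ℓ E M := by
  have h1 : |M| / Real.sqrt (2*E) ≤ rmin ℓ E M := by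
    rw [rmin_eq]
    exact le_csInf (Sset_nonempty hℓ hE hM hVm) (fun _ hr => rlow_le_mem hE hr)
  have h2 : 0 < |M| / Real.sqrt (2*E) := by
    have := abs_pos.mpr hM
    positivity
  linarith

lemma rmin_le_of_mem (hr : r ∈ Sset ℓ E M) : rmin ℓ E M ≤ r := by
  rw [rmin_eq]; exact csInf_le (Sset_bddBelow hℓ hE hM hVm) hr

lemma le_rmax_of_mem (hr : r ∈ Sset ℓ E M) : r ≤ rmax ℓ E M := by
  rw [rmax_eq]; exact le_csSup (Sset_bddAbove hℓ hE hM hVm) hr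

lemma rmin_le_rmax : rmin ℓ E M ≤ rmax ℓ E M :=
  (rmin_le_of_mem hℓ hE hM hVm (r0_mem hℓ hE hM hVm)).trans
    (le_rmax_of_mem hℓ hE hM hVm (r0_mem hℓ hE hM hVm))

lemma rmax_le_Rtop : rmax ℓ E M ≤ (2*(ℓ:ℝ)*E) ^ (1/(2*(ℓ:ℝ))) := by
  rw [rmax_eq]
  exact csSup_le (Sset_nonempty hℓ hE hM hVm) (fun _ hr => mem_le_Rtop hℓ hr)

lemma rmin_nonneg : 0 ≤ rmin ℓ E M := (rmin_pos hℓ hE hM hVm).le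

end turning

end AHO


namespace AHO

open Real Set intervalIntegral MeasureTheory

variable {ℓ : ℕ} {E M t u v c r a b : ℝ}

/-- the integrand of the radial action. -/
noncomputable def f (ℓ : ℕ) (E M r : ℝ) : ℝ := Real.sqrt (E - Vstar ℓ M r)

lemma radialAction_eq (ℓ : ℕ) (E M : ℝ) :
    radialAction ℓ E M
      = (Real.sqrt 2 / Real.pi) * ∫ r in (rmin ℓ E M)..(rmax ℓ E M), f ℓ E M r := rfl

lemma f_contOn (ℓ : ℕ) (E M : ℝ) {s : Set ℝ} (hs : ∀ x ∈ s, x ≠ 0) :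
    ContinuousOn (f ℓ E M) s := by
  apply Real.continuous_sqrt.comp_continuousOn
  apply ContinuousOn.sub continuousOn_const
  unfold Vstar
  apply ContinuousOn.add
  · exact ContinuousOn.div continuousOn_const (by fun_prop)
      (fun x hx => by have := hs x hx; positivity)
  · exact Continuous.continuousOn (by fun_prop)

lemma f_integrable (ha : 0 < a) (hab : a ≤ b) :
    IntervalIntegrable (f ℓ E M) volume a b := by
  apply ContinuousOn.intervalIntegrable
  apply f_contOn
  intro x hx
  rw [uIcc_of_le hab] at hx
  exact ne_of_gt (lt_of_lt_of_le ha hx.1)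

lemma f_nonneg (ℓ : ℕ) (E M r : ℝ) : 0 ≤ f ℓ E M r := Real.sqrt_nonneg _

section estimates

variable (hℓ : 1 ≤ ℓ) (hE : 0 < E) (hM : M ≠ 0) (hVm : Vm ℓ M < E)
include hℓ hE hM hVm

/-- window lower bound for the radial action. -/
lemma ra_window (hu : 0 < u) (huv : u ≤ v) (hc : 0 < c)
    (hw : ∀ r ∈ Icc u v, Vstar ℓ M r ≤ E - c) :
    Real.sqrt 2 / Real.pi * ((v - u) * Real.sqrt c) ≤ radialAction ℓ E M := by
  have humem : u ∈ Sset ℓ E M := ⟨hu, by linarith [hw u ⟨le_rfl, huv⟩]⟩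
  have hvmem : v ∈ Sset ℓ E M := ⟨lt_of_lt_of_le hu huv, by linarith [hw v ⟨huv, le_rfl⟩]⟩
  have hAu : rmin ℓ E M ≤ u := rmin_le_of_mem hℓ hE hM hVm humem
  have hvB : v ≤ rmax ℓ E M := le_rmax_of_mem hℓ hE hM hVm hvmem
  have hApos : 0 < rmin ℓ E M := rmin_pos hℓ hE hM hVm
  have hAB : rmin ℓ E M ≤ rmax ℓ E M := rmin_le_rmax hℓ hE hM hVm
  have step1 : (v - u) * Real.sqrt c ≤ ∫ r in u..v, f ℓ E M r := by
    have h1 : ∫ r in u..v, Real.sqrt c = (v - u) * Real.sqrt c := by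
      rw [intervalIntegral.integral_const, smul_eq_mul]
    rw [← h1]
    apply intervalIntegral.integral_mono_on huv intervalIntegrable_const
      (f_integrable hu huv)
    intro x hx
    apply Real.sqrt_le_sqrt
    linarith [hw x hx]
  have step2 : ∫ r in u..v, f ℓ E M r ≤ ∫ r in (rmin ℓ E M)..(rmax ℓ E M), f ℓ E M r := by
    apply intervalIntegral.integral_mono_interval hAu huv hvB
      (Filter.Eventually.of_forall fun x => f_nonneg ℓ E M x)
      (f_integrable hApos hAB)
  rw [radialAction_eq]
  have hfac : 0 ≤ Real.sqrt 2 / Real.pi := by positivity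
  exact mul_le_mul_of_nonneg_left (step1.trans step2) hfac

/-- upper bound for the radial action. -/
lemma ra_upper :
    radialAction ℓ E M
      ≤ Real.sqrt 2 / Real.pi * ((2*(ℓ:ℝ)*E) ^ (1/(2*(ℓ:ℝ))) * Real.sqrt (E - Vm ℓ M)) := by
  have hApos : 0 < rmin ℓ E M := rmin_pos hℓ hE hM hVm
  have hAB : rmin ℓ E M ≤ rmax ℓ E M := rmin_le_rmax hℓ hE hM hVm
  have step1 : ∫ r in (rmin ℓ E M)..(rmax ℓ E M), f ℓ E M r
      ≤ ∫ r in (rmin ℓ E M)..(rmax ℓ E M), Real.sqrt (E - Vm ℓ M) := by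
    apply intervalIntegral.integral_mono_on hAB (f_integrable hApos hAB)
      intervalIntegrable_const
    intro x hx
    apply Real.sqrt_le_sqrt
    have : Vm ℓ M ≤ Vstar ℓ M x := Vm_le_Vstar hℓ M (lt_of_lt_of_le hApos hx.1)
    linarith
  have step2 : ∫ r in (rmin ℓ E M)..(rmax ℓ E M), Real.sqrt (E - Vm ℓ M)
      ≤ (2*(ℓ:ℝ)*E) ^ (1/(2*(ℓ:ℝ))) * Real.sqrt (E - Vm ℓ M) := by
    rw [intervalIntegral.integral_const, smul_eq_mul]
    apply mul_le_mul_of_nonneg_right _ (Real.sqrt_nonneg _)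
    have h1 : rmax ℓ E M ≤ (2*(ℓ:ℝ)*E) ^ (1/(2*(ℓ:ℝ))) := rmax_le_Rtop hℓ hE hM hVm
    linarith [rmin_nonneg hℓ hE hM hVm]
  rw [radialAction_eq]
  have hfac : 0 ≤ Real.sqrt 2 / Real.pi := by positivity
  exact mul_le_mul_of_nonneg_left (step1.trans step2) hfac

/-- monotonicity gap in the energy for the radial action. -/
lemma ra_gap (ht : E < t) (hu : 0 < u) (huv : u ≤ v)
    (hw : ∀ r ∈ Icc u v, Vstar ℓ M r ≤ E) :
    radialAction ℓ E M + Real.sqrt 2 / Real.pi * ((v - u) * ((t - E)/(2 * Real.sqrt t)))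
      ≤ radialAction ℓ t M := by
  have hl := lpos hℓ
  have htpos : 0 < t := hE.trans ht
  have hVmt : Vm ℓ M < t := hVm.trans ht
  set A := rmin ℓ E M with hA
  set B := rmax ℓ E M with hB
  set A' := rmin ℓ t M with hA'
  set B' := rmax ℓ t M with hB'
  have humem : u ∈ Sset ℓ E M := ⟨hu, hw u ⟨le_rfl, huv⟩⟩
  have hvmem : v ∈ Sset ℓ E M := ⟨lt_of_lt_of_le hu huv, hw v ⟨huv, le_rfl⟩⟩
  have hAu : A ≤ u := rmin_le_of_mem hℓ hE hM hVm humem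
  have hvB : v ≤ B := le_rmax_of_mem hℓ hE hM hVm hvmem
  have hApos : 0 < A := rmin_pos hℓ hE hM hVm
  have hAB : A ≤ B := rmin_le_rmax hℓ hE hM hVm
  have hA'pos : 0 < A' := rmin_pos hℓ htpos hM hVmt
  have hA'B' : A' ≤ B' := rmin_le_rmax hℓ htpos hM hVmt
  have hsub : Sset ℓ E M ⊆ Sset ℓ t M := fun x hx => ⟨hx.1, hx.2.trans ht.le⟩
  have hA'A : A' ≤ A := by
    rw [hA, hA', rmin_eq, rmin_eq]
    exact csInf_le_csInf (Sset_bddBelow hℓ htpos hM hVmt) (Sset_nonempty hℓ hE hM hVm) hsub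
  have hBB' : B ≤ B' := by
    rw [hB, hB', rmax_eq, rmax_eq]
    exact csSup_le_csSup (Sset_bddAbove hℓ htpos hM hVmt) (Sset_nonempty hℓ hE hM hVm) hsub
  have h1 : ∫ r in A..B, f ℓ t M r ≤ ∫ r in A'..B', f ℓ t M r :=
    intervalIntegral.integral_mono_interval hA'A hAB hBB'
      (Filter.Eventually.of_forall fun x => f_nonneg ℓ t M x)
      (f_integrable hA'pos hA'B')
  -- pointwise difference bound on the window
  have hptwise : ∀ x ∈ Icc u v, (t - E)/(2 * Real.sqrt t) ≤ f ℓ t M x - f ℓ E M x := by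
    intro x hx
    have hxpos : 0 < x := lt_of_lt_of_le hu hx.1
    have hVx : 0 ≤ Vstar ℓ M x := Vstar_nonneg hℓ M hxpos
    have hbx : 0 ≤ E - Vstar ℓ M x := by linarith [hw x hx]
    have hax : 0 < t - Vstar ℓ M x := by linarith [hw x hx]
    set sa := Real.sqrt (t - Vstar ℓ M x) with hsa
    set sb := Real.sqrt (E - Vstar ℓ M x) with hsb
    have hsapos : 0 < sa := Real.sqrt_pos.mpr hax
    have hsbnn : 0 ≤ sb := Real.sqrt_nonneg _
    have hsum : 0 < sa + sb := by linarith
    have hkey : (sa - sb) * (sa + sb) = t - E := by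
      have h1 : sa^2 = t - Vstar ℓ M x := Real.sq_sqrt hax.le
      have h2 : sb^2 = E - Vstar ℓ M x := Real.sq_sqrt hbx
      nlinarith [h1, h2]
    have hsale : sa ≤ Real.sqrt t := Real.sqrt_le_sqrt (by linarith)
    have hsble : sb ≤ Real.sqrt t := Real.sqrt_le_sqrt (by linarith)
    have hsumle : sa + sb ≤ 2 * Real.sqrt t := by linarith
    have heq : sa - sb = (t - E)/(sa + sb) := by
      rw [eq_div_iff (ne_of_gt hsum)]
      exact hkey
    have : (t - E)/(2 * Real.sqrt t) ≤ (t - E)/(sa + sb) := by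
      gcongr
    show (t - E)/(2 * Real.sqrt t) ≤ sa - sb
    rw [heq]
    exact this
  have h2 : (∫ r in A..B, f ℓ E M r) + ∫ x in u..v, (t - E)/(2 * Real.sqrt t)
      ≤ ∫ r in A..B, f ℓ t M r := by
    have hdiff_int : ∫ r in A..B, (f ℓ t M r - f ℓ E M r)
        = (∫ r in A..B, f ℓ t M r) - ∫ r in A..B, f ℓ E M r :=
      intervalIntegral.integral_sub (f_integrable hApos hAB) (f_integrable hApos hAB)
    have hmono1 : ∫ x in u..v, (t - E)/(2 * Real.sqrt t)
        ≤ ∫ r in u..v, (f ℓ t M r - f ℓ E M r) := by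
      apply intervalIntegral.integral_mono_on huv intervalIntegrable_const
        ((f_integrable hu huv).sub (f_integrable hu huv))
      exact hptwise
    have hmono2 : ∫ r in u..v, (f ℓ t M r - f ℓ E M r)
        ≤ ∫ r in A..B, (f ℓ t M r - f ℓ E M r) := by
      apply intervalIntegral.integral_mono_interval hAu huv hvB
      · apply Filter.Eventually.of_forall
        intro x
        have : E - Vstar ℓ M x ≤ t - Vstar ℓ M x := by linarith
        have := Real.sqrt_le_sqrt this
        simp only [f, Pi.zero_apply, sub_nonneg]
        exact this
      · exact (f_integrable hApos hAB).sub (f_integrable hApos hAB)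
    have := hmono1.trans (hmono2.trans_eq hdiff_int)
    linarith
  have hconst : ∫ x in u..v, (t - E)/(2 * Real.sqrt t) = (v - u) * ((t - E)/(2 * Real.sqrt t)) := by
    rw [intervalIntegral.integral_const, smul_eq_mul]
  have hfac : 0 ≤ Real.sqrt 2 / Real.pi := by positivity
  have hcomb : (∫ r in A..B, f ℓ E M r) + (v - u) * ((t - E)/(2 * Real.sqrt t))
      ≤ ∫ r in A'..B', f ℓ t M r := by
    rw [← hconst]
    linarith [h2.trans h1]
  calc radialAction ℓ E M + Real.sqrt 2 / Real.pi * ((v - u) * ((t - E)/(2 * Real.sqrt t)))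
      = Real.sqrt 2 / Real.pi
          * ((∫ r in A..B, f ℓ E M r) + (v - u) * ((t - E)/(2 * Real.sqrt t))) := by
        rw [radialAction_eq, hA, hB]
        ring
    _ ≤ Real.sqrt 2 / Real.pi * (∫ r in A'..B', f ℓ t M r) :=
        mul_le_mul_of_nonneg_left hcomb hfac
    _ = radialAction ℓ t M := by
        rw [radialAction_eq, hA', hB']

end estimates

end AHO


namespace AHO

open Real Set intervalIntegral MeasureTheory Pointwise

variable {ℓ : ℕ} {E M s μ : ℝ}

section scaling

variable (hℓ : 1 ≤ ℓ) (hμ : 0 < μ)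
include hℓ hμ

lemma Vstar_scale (M : ℝ) (hs : s ≠ 0) :
    Vstar ℓ (μ ^ (((ℓ:ℝ)+1)/(2*(ℓ:ℝ))) * M) (μ ^ ((1:ℝ)/(2*(ℓ:ℝ))) * s)
      = μ * Vstar ℓ M s := by
  have hl := lpos hℓ
  have hc2 : (μ ^ ((1:ℝ)/(2*(ℓ:ℝ)))) ^ (2:ℕ) = μ ^ ((1:ℝ)/(ℓ:ℝ)) := by
    rw [← Real.rpow_natCast (μ ^ ((1:ℝ)/(2*(ℓ:ℝ)))) 2, ← Real.rpow_mul hμ.le]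
    congr 1
    push_cast
    field_simp
  have hc2l : (μ ^ ((1:ℝ)/(2*(ℓ:ℝ)))) ^ (2*ℓ:ℕ) = μ := by
    rw [← Real.rpow_natCast (μ ^ ((1:ℝ)/(2*(ℓ:ℝ)))) (2*ℓ), ← Real.rpow_mul hμ.le]
    rw [show (1:ℝ)/(2*(ℓ:ℝ)) * ((2*ℓ:ℕ):ℝ) = 1 by push_cast; field_simp]
    exact Real.rpow_one μ
  have hb2 : (μ ^ (((ℓ:ℝ)+1)/(2*(ℓ:ℝ)))) ^ (2:ℕ) = μ * μ ^ ((1:ℝ)/(ℓ:ℝ)) := by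
    rw [← Real.rpow_natCast (μ ^ (((ℓ:ℝ)+1)/(2*(ℓ:ℝ)))) 2, ← Real.rpow_mul hμ.le]
    rw [show ((ℓ:ℝ)+1)/(2*(ℓ:ℝ)) * ((2:ℕ):ℝ) = 1 + (1:ℝ)/(ℓ:ℝ) by push_cast; field_simp]
    rw [Real.rpow_add hμ, Real.rpow_one]
  have hcινpos : (0:ℝ) < μ ^ ((1:ℝ)/(ℓ:ℝ)) := Real.rpow_pos_of_pos hμ _
  unfold Vstar
  rw [mul_pow, mul_pow, mul_pow, hc2, hc2l, hb2]
  have hs2 : s^2 ≠ 0 := pow_ne_zero _ hs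
  field_simp

lemma Vm_scale (M : ℝ) :
    Vm ℓ (μ ^ (((ℓ:ℝ)+1)/(2*(ℓ:ℝ))) * M) = μ * Vm ℓ M := by
  have hβpos : (0:ℝ) < μ ^ (((ℓ:ℝ)+1)/(2*(ℓ:ℝ))) := Real.rpow_pos_of_pos hμ _
  unfold Vm
  rw [abs_mul, abs_of_pos hβpos,
    Real.mul_rpow hβpos.le (abs_nonneg M), ← Real.rpow_mul hμ.le,
    show (((ℓ:ℝ)+1)/(2*(ℓ:ℝ))) * ((2*(ℓ:ℝ))/((ℓ:ℝ)+1)) = 1 from beta_mul_gamma hℓ,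
    Real.rpow_one]
  ring

lemma Sset_scale (E M : ℝ) :
    Sset ℓ (μ*E) (μ ^ (((ℓ:ℝ)+1)/(2*(ℓ:ℝ))) * M)
      = (μ ^ ((1:ℝ)/(2*(ℓ:ℝ)))) • Sset ℓ E M := by
  have hcpos : (0:ℝ) < μ ^ ((1:ℝ)/(2*(ℓ:ℝ))) := Real.rpow_pos_of_pos hμ _
  ext r
  rw [Set.mem_smul_set]
  constructor
  · rintro ⟨hrpos, hrV⟩
    refine ⟨(μ ^ ((1:ℝ)/(2*(ℓ:ℝ))))⁻¹ * r, ⟨by positivity, ?_⟩, ?_⟩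
    · have hy : (μ ^ ((1:ℝ)/(2*(ℓ:ℝ))))⁻¹ * r ≠ 0 := by positivity
      have := Vstar_scale hℓ hμ (s := (μ ^ ((1:ℝ)/(2*(ℓ:ℝ))))⁻¹ * r) M hy
      rw [show μ ^ ((1:ℝ)/(2*(ℓ:ℝ))) * ((μ ^ ((1:ℝ)/(2*(ℓ:ℝ))))⁻¹ * r) = r by
        field_simp] at this
      rw [← mul_le_mul_iff_right₀ hμ, ← this]
      exact hrV
    · simp only [smul_eq_mul]
      field_simp
  · rintro ⟨y, ⟨hypos, hyV⟩, rfl⟩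
    simp only [smul_eq_mul]
    constructor
    · positivity
    · rw [Vstar_scale hℓ hμ M (ne_of_gt hypos)]
      exact mul_le_mul_of_nonneg_left hyV hμ.le

lemma rmin_scale (E M : ℝ) :
    rmin ℓ (μ*E) (μ ^ (((ℓ:ℝ)+1)/(2*(ℓ:ℝ))) * M)
      = μ ^ ((1:ℝ)/(2*(ℓ:ℝ))) * rmin ℓ E M := by
  rw [rmin_eq, rmin_eq, Sset_scale hℓ hμ,
    Real.sInf_smul_of_nonneg (by positivity), smul_eq_mul]

lemma rmax_scale (E M : ℝ) :
    rmax ℓ (μ*E) (μ ^ (((ℓ:ℝ)+1)/(2*(ℓ:ℝ))) * M)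
      = μ ^ ((1:ℝ)/(2*(ℓ:ℝ))) * rmax ℓ E M := by
  rw [rmax_eq, rmax_eq, Sset_scale hℓ hμ,
    Real.sSup_smul_of_nonneg (by positivity), smul_eq_mul]

lemma ra_scale (hE : 0 < E) (hM : M ≠ 0) (hVm : Vm ℓ M < E) :
    radialAction ℓ (μ*E) (μ ^ (((ℓ:ℝ)+1)/(2*(ℓ:ℝ))) * M)
      = μ ^ (((ℓ:ℝ)+1)/(2*(ℓ:ℝ))) * radialAction ℓ E M := by
  have hl := lpos hℓ
  set cc : ℝ := μ ^ ((1:ℝ)/(2*(ℓ:ℝ))) with hcc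
  have hcpos : (0:ℝ) < cc := Real.rpow_pos_of_pos hμ _
  set A := rmin ℓ E M with hA
  set B := rmax ℓ E M with hB
  have hApos : 0 < A := rmin_pos hℓ hE hM hVm
  have hAB : A ≤ B := rmin_le_rmax hℓ hE hM hVm
  have key : ∀ x ∈ uIcc A B,
      f ℓ (μ*E) (μ ^ (((ℓ:ℝ)+1)/(2*(ℓ:ℝ))) * M) (cc*x) = Real.sqrt μ * f ℓ E M x := by
    intro x hx
    rw [uIcc_of_le hAB] at hx
    have hxpos : 0 < x := lt_of_lt_of_le hApos hx.1
    unfold f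
    rw [Vstar_scale hℓ hμ M (ne_of_gt hxpos), show μ*E - μ*Vstar ℓ M x = μ*(E - Vstar ℓ M x) by
      ring, Real.sqrt_mul hμ.le]
  have e1 : ∫ x in A..B, f ℓ (μ*E) (μ ^ (((ℓ:ℝ)+1)/(2*(ℓ:ℝ))) * M) (cc*x)
      = cc⁻¹ • ∫ r in cc*A..cc*B, f ℓ (μ*E) (μ ^ (((ℓ:ℝ)+1)/(2*(ℓ:ℝ))) * M) r :=
    intervalIntegral.integral_comp_mul_left _ (ne_of_gt hcpos)
  have e2 : ∫ x in A..B, f ℓ (μ*E) (μ ^ (((ℓ:ℝ)+1)/(2*(ℓ:ℝ))) * M) (cc*x)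
      = Real.sqrt μ * ∫ x in A..B, f ℓ E M x := by
    rw [intervalIntegral.integral_congr key]
    exact intervalIntegral.integral_const_mul _ _
  rw [radialAction_eq ℓ (μ*E), radialAction_eq ℓ E M, rmin_scale hℓ hμ, rmax_scale hℓ hμ,
    ← hA, ← hB, ← hcc]
  have e3 : ∫ r in cc*A..cc*B, f ℓ (μ*E) (μ ^ (((ℓ:ℝ)+1)/(2*(ℓ:ℝ))) * M) r
      = cc * (Real.sqrt μ * ∫ x in A..B, f ℓ E M x) := by
    rw [← e2, e1, smul_eq_mul]
    field_simp
  have e4 : cc * Real.sqrt μ = μ ^ (((ℓ:ℝ)+1)/(2*(ℓ:ℝ))) := by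
    rw [hcc, Real.sqrt_eq_rpow, ← Real.rpow_add hμ]
    congr 1
    field_simp
    ring
  rw [e3, ← e4]
  ring

end scaling

end AHO


namespace AHO

open Real Set intervalIntegral MeasureTheory Pointwise

variable {ℓ : ℕ} {E M : ℝ}

/-- the interior of the action cone. -/
def Ucone : Set (ℝ × ℝ) := {a : ℝ × ℝ | 0 < a.1 ∧ -a.2 < a.1}

lemma Ucone_open : IsOpen Ucone := by
  apply IsOpen.inter
  · exact isOpen_lt continuous_const continuous_fst
  · exact isOpen_lt (continuous_snd.neg) continuous_fst

lemma Ucone_convex : Convex ℝ Ucone := by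
  have h1 : Convex ℝ {a : ℝ × ℝ | 0 < a.1} :=
    (convex_Ioi (0:ℝ)).linear_preimage (LinearMap.fst ℝ ℝ ℝ)
  have h2 : Convex ℝ {a : ℝ × ℝ | 0 < a.1 + a.2} :=
    (convex_Ioi (0:ℝ)).linear_preimage (LinearMap.fst ℝ ℝ ℝ + LinearMap.snd ℝ ℝ ℝ)
  have : Ucone = {a : ℝ × ℝ | 0 < a.1} ∩ {a : ℝ × ℝ | 0 < a.1 + a.2} := by
    ext a
    simp only [Ucone, Set.mem_setOf_eq, Set.mem_inter_iff]
    constructor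
    · rintro ⟨h1, h2⟩; exact ⟨h1, by linarith⟩
    · rintro ⟨h1, h2⟩; exact ⟨h1, by linarith⟩
  rw [this]
  exact h1.inter h2

lemma interior_actionCone : interior actionCone = Ucone := by
  apply subset_antisymm
  · intro a ha
    rw [mem_interior_iff_mem_nhds, Metric.mem_nhds_iff] at ha
    obtain ⟨ε, hε, hball⟩ := ha
    have htest : (a.1 - ε/2, a.2) ∈ actionCone := by
      apply hball
      rw [Metric.mem_ball, Prod.dist_eq]
      simp only [Real.dist_eq]
      rw [show a.1 - ε/2 - a.1 = -(ε/2) by ring]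
      simp only [abs_neg, sub_self, abs_zero]
      rw [abs_of_pos (by linarith)]
      simp only [max_def]
      split <;> linarith
    obtain ⟨hc1, hc2⟩ := htest
    rcases le_or_gt 0 a.2 with h2 | h2
    · have := hc1 h2
      constructor
      · simp only at this; linarith
      · simp only at this; linarith
    · have := hc2 h2
      rw [abs_of_neg h2] at this
      simp only at this
      constructor <;> linarith
  · apply interior_maximal _ Ucone_open
    rintro a ⟨h1, h2⟩
    constructor
    · intro _; exact h1.le
    · intro h3
      rw [abs_of_neg h3]
      exact h2.le

lemma omega_open (hℓ : 1 ≤ ℓ) : IsOpen (OmegaRegion ℓ) := by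
  have hβ : (0:ℝ) ≤ ((ℓ:ℝ)+1)/(2*(ℓ:ℝ)) := (beta_pos hℓ).le
  have hcont : Continuous fun p : ℝ × ℝ => (2 * (ℓ:ℝ) / ((ℓ:ℝ) + 1) * p.1)
      ^ (((ℓ:ℝ) + 1) / (2 * (ℓ:ℝ))) := by
    rw [continuous_iff_continuousAt]
    intro p
    exact (Real.continuousAt_rpow_const _ _ (Or.inr hβ)).comp
      ((continuous_const.mul continuous_fst).continuousAt)
  have : OmegaRegion ℓ = {p : ℝ × ℝ | 0 < p.1} ∩
      {p : ℝ × ℝ | |p.2| < (2 * (ℓ:ℝ) / ((ℓ:ℝ) + 1) * p.1) ^ (((ℓ:ℝ) + 1) / (2 * (ℓ:ℝ)))} :=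
    rfl
  rw [this]
  exact (isOpen_lt continuous_const continuous_fst).inter
    (isOpen_lt (continuous_snd.abs) hcont)

/-- a window below the energy level around the minimum point, for `M ≠ 0`. -/
lemma window_point (hℓ : 1 ≤ ℓ) (hE : 0 < E) (hM : M ≠ 0) (hVm : Vm ℓ M < E) :
    ∃ u v c : ℝ, 0 < u ∧ u < v ∧ 0 < c ∧ ∀ r ∈ Icc u v, Vstar ℓ M r ≤ E - c := by
  have habs : 0 < |M| := abs_pos.mpr hM
  set r₀ : ℝ := |M| ^ (1/((ℓ:ℝ)+1)) with hr₀
  have hr₀pos : 0 < r₀ := Real.rpow_pos_of_pos habs _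
  set c : ℝ := (E - Vm ℓ M)/2 with hc
  have hcpos : 0 < c := by rw [hc]; linarith
  have hcont : ContinuousAt (Vstar ℓ M) r₀ := by
    unfold Vstar
    apply ContinuousAt.add
    · exact continuousAt_const.div (by fun_prop) (by positivity)
    · fun_prop
  have hval : Vstar ℓ M r₀ < E - c := by
    rw [Vstar_r0 hℓ hM, hc]
    linarith
  have hnhds : {r : ℝ | Vstar ℓ M r < E - c} ∈ nhds r₀ :=
    hcont.preimage_mem_nhds (Iio_mem_nhds hval)
  rw [Metric.mem_nhds_iff] at hnhds
  obtain ⟨ε, hεpos, hball⟩ := hnhds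
  set δ : ℝ := min (ε/2) (r₀/2) with hδ
  have hδpos : 0 < δ := by rw [hδ]; positivity
  refine ⟨r₀ - δ, r₀ + δ, c, ?_, by linarith, hcpos, ?_⟩
  · have : δ ≤ r₀/2 := min_le_right _ _
    linarith
  · intro r hr
    have h1 : |r - r₀| ≤ δ := by
      rw [abs_le]
      constructor <;> [linarith [hr.1]; linarith [hr.2]]
    have h2 : r ∈ Metric.ball r₀ ε := by
      rw [Metric.mem_ball, Real.dist_eq]
      have : δ ≤ ε/2 := min_le_left _ _
      linarith
    exact (hball h2).le

/-- a window below the energy level, uniform in small angular momenta. -/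
lemma window_axis (hℓ : 1 ≤ ℓ) (hE : 0 < E) :
    ∃ u v c M₀ : ℝ, 0 < u ∧ u < v ∧ 0 < c ∧ 0 < M₀ ∧
      ∀ M' : ℝ, |M'| ≤ M₀ → ∀ r ∈ Icc u v, Vstar ℓ M' r ≤ E - c := by
  have hl := lpos hℓ
  set v : ℝ := ((ℓ:ℝ)*E) ^ ((1:ℝ)/(2*(ℓ:ℝ))) with hv
  have hvpos : 0 < v := Real.rpow_pos_of_pos (by positivity) _
  set u : ℝ := v/2 with hu
  have hupos : 0 < u := by rw [hu]; positivity
  refine ⟨u, v, E/4, u * Real.sqrt (E/2), hupos, by rw [hu]; linarith, by positivity,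
    by positivity, ?_⟩
  intro M' hM' r hr
  have hrpos : 0 < r := lt_of_lt_of_le hupos hr.1
  have hv2l : v ^ (2*ℓ) = (ℓ:ℝ)*E := by
    rw [hv, ← Real.rpow_natCast (((ℓ:ℝ)*E) ^ ((1:ℝ)/(2*(ℓ:ℝ)))) (2*ℓ),
      ← Real.rpow_mul (by positivity)]
    rw [show (1:ℝ)/(2*(ℓ:ℝ)) * ((2*ℓ:ℕ):ℝ) = 1 by push_cast; field_simp]
    exact Real.rpow_one _
  have hterm2 : r ^ (2*ℓ) / (2*(ℓ:ℝ)) ≤ E/2 := by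
    have h1 : r ^ (2*ℓ) ≤ v ^ (2*ℓ) := pow_le_pow_left₀ hrpos.le hr.2 _
    rw [hv2l] at h1
    rw [div_le_iff₀ (by positivity)]
    calc r ^ (2*ℓ) ≤ (ℓ:ℝ)*E := h1
      _ = E/2 * (2*(ℓ:ℝ)) := by ring
  have hterm1 : M' ^ 2 / (2*r^2) ≤ E/4 := by
    have h1 : M' ^ 2 ≤ (u * Real.sqrt (E/2))^2 := by
      rw [← sq_abs M']
      apply pow_le_pow_left₀ (abs_nonneg M') hM'
    have h2 : (u * Real.sqrt (E/2))^2 = u^2 * (E/2) := by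
      rw [mul_pow, Real.sq_sqrt (by positivity)]
    have h3 : u^2 ≤ r^2 := pow_le_pow_left₀ hupos.le hr.1 _
    calc M' ^ 2 / (2*r^2) ≤ u^2 * (E/2) / (2*r^2) := by
          apply div_le_div_of_nonneg_right _ (by positivity)
          rw [← h2]; exact h1
      _ ≤ u^2 * (E/2) / (2*u^2) := by
          apply div_le_div_of_nonneg_left (by positivity) (by positivity)
          linarith
      _ = E/4 := by field_simp; ring
  unfold Vstar
  linarith

end AHO


namespace AHO

open Real Set intervalIntegral MeasureTheory Pointwise Filter Topology

/-- the action map `(E, M) ↦ (a₁(E,M), M)`. -/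
def gmap (a1 : ℝ × ℝ → ℝ) (p : ℝ × ℝ) : ℝ × ℝ := (a1 p, p.2)

/-- the hamiltonian in action variables, defined through the global inverse of `gmap`. -/
noncomputable def hfun (ℓ : ℕ) (a1 : ℝ × ℝ → ℝ) (q : ℝ × ℝ) : ℝ :=
  (Function.invFunOn (gmap a1) (OmegaRegion ℓ) q).1

section main

variable {ℓ : ℕ} {E M t μ : ℝ} (hℓ : 1 ≤ ℓ) (a1 : ℝ × ℝ → ℝ)
  (ha1anal : AnalyticOnNhd ℝ a1 (OmegaRegion ℓ))
  (ha1pos : ∀ p ∈ OmegaRegion ℓ, 0 < p.2 → a1 p = radialAction ℓ p.1 p.2)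
  (ha1neg : ∀ p ∈ OmegaRegion ℓ, p.2 < 0 → a1 p = radialAction ℓ p.1 p.2 - p.2)

include hℓ

lemma axis_mem_omega (hE : 0 < E) : ((E, 0) : ℝ × ℝ) ∈ OmegaRegion ℓ := by
  rw [omega_iff hℓ]
  exact ⟨hE, by rw [Vm_zero hℓ]; exact hE⟩

include ha1anal in
lemma axis_tendsto (hE : 0 < E) :
    Tendsto (fun M' => a1 (E, M')) (𝓝[>] (0:ℝ)) (𝓝 (a1 (E, 0))) := by
  have hmem : ((E, 0) : ℝ × ℝ) ∈ OmegaRegion ℓ := axis_mem_omega hℓ hE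
  have hcont : ContinuousAt a1 (E, 0) := (ha1anal _ hmem).continuousAt
  have hcurve : Tendsto (fun M' : ℝ => ((E, M') : ℝ × ℝ)) (𝓝[>] (0:ℝ)) (𝓝 (E, 0)) :=
    ((Continuous.prodMk_right E).tendsto 0).mono_left nhdsWithin_le_nhds
  exact hcont.tendsto.comp hcurve

include ha1pos ha1neg in
/-- off the axis, `a1` is the radial action plus the positive part of `-M`. -/
lemma a1_eq (hp : (E, M) ∈ OmegaRegion ℓ) (hM : M ≠ 0) :
    a1 (E, M) = radialAction ℓ E M + max 0 (-M) := by
  rcases lt_or_gt_of_ne hM with h | h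
  · rw [ha1neg _ hp h, max_eq_right (by linarith : (0:ℝ) ≤ -M)]
    ring
  · rw [ha1pos _ hp h, max_eq_left (by linarith : -M ≤ (0:ℝ))]
    ring

include ha1anal ha1pos ha1neg in
/-- positivity of the action variables : `gmap` maps `Ω` into the open cone. -/
lemma gmap_mem_Ucone : ∀ p ∈ OmegaRegion ℓ, gmap a1 p ∈ Ucone := by
  rintro ⟨E, M⟩ hp
  obtain ⟨hE, hVm⟩ := (omega_iff hℓ _).mp hp
  simp only [gmap, Ucone, Set.mem_setOf_eq]
  rcases eq_or_ne M 0 with hM | hM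
  · subst hM
    obtain ⟨u, v, c, M₀, hu, huv, hc, hM₀, hw⟩ := window_axis hℓ hE
    obtain ⟨M₀', hM₀', hVm'⟩ := exists_M0 hℓ hE
    set b : ℝ := Real.sqrt 2 / Real.pi * ((v - u) * Real.sqrt c) with hb
    have hbpos : 0 < b := by
      rw [hb]
      have : 0 < v - u := by linarith
      positivity
    have hble : b ≤ a1 (E, 0) := by
      apply ge_of_tendsto (axis_tendsto hℓ a1 ha1anal hE)
      filter_upwards [Ioc_mem_nhdsGT_of_mem
        ⟨le_rfl, lt_min hM₀ hM₀'⟩] with M' hM'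
      obtain ⟨hM'0, hM'le⟩ := hM'
      have hM'Ω : ((E, M') : ℝ × ℝ) ∈ OmegaRegion ℓ := by
        rw [omega_iff hℓ]
        exact ⟨hE, hVm' M' (by rw [abs_of_pos hM'0]; exact hM'le.trans (min_le_right _ _))⟩
      rw [ha1pos _ hM'Ω hM'0]
      exact ra_window hℓ hE (ne_of_gt hM'0)
        (hVm' M' (by rw [abs_of_pos hM'0]; exact hM'le.trans (min_le_right _ _)))
        hu huv.le hc (hw M' (by rw [abs_of_pos hM'0]; exact hM'le.trans (min_le_left _ _)))
    constructor
    · linarith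
    · simp only [neg_zero]
      linarith
  · obtain ⟨u, v, c, hu, huv, hc, hw⟩ := window_point hℓ hE hM hVm
    have hra : Real.sqrt 2 / Real.pi * ((v - u) * Real.sqrt c) ≤ radialAction ℓ E M :=
      ra_window hℓ hE hM hVm hu huv.le hc hw
    have hrapos : 0 < radialAction ℓ E M := by
      have : 0 < v - u := by linarith
      have hb : 0 < Real.sqrt 2 / Real.pi * ((v - u) * Real.sqrt c) := by positivity
      linarith
    rw [a1_eq hℓ a1 ha1pos ha1neg hp hM]
    constructor
    · have := le_max_left (0:ℝ) (-M)
      linarith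
    · rcases le_or_gt 0 M with h | h
      · have : max 0 (-M) = 0 ∨ max 0 (-M) = -M := max_choice _ _
        rcases this with h' | h' <;> rw [h'] <;> linarith
      · rw [max_eq_right (by linarith : (0:ℝ) ≤ -M)]
        linarith

include ha1anal ha1pos ha1neg in
/-- uniform lower bound for energy-increments of `a1`. -/
lemma a1_gap_aux (hp : (E, M) ∈ OmegaRegion ℓ) :
    ∃ w : ℝ, 0 < w ∧ ∀ t, E < t →
      a1 (E, M) + w * ((t - E)/Real.sqrt t) ≤ a1 (t, M) := by
  obtain ⟨hE, hVm⟩ := (omega_iff hℓ _).mp hp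
  rcases eq_or_ne M 0 with hM | hM
  · subst hM
    obtain ⟨u, v, c, M₀, hu, huv, hc, hM₀, hw⟩ := window_axis hℓ hE
    obtain ⟨M₀', hM₀', hVm'⟩ := exists_M0 hℓ hE
    refine ⟨Real.sqrt 2 / Real.pi * ((v - u)/2), by
      have : 0 < v - u := by linarith
      positivity, ?_⟩
    intro t ht
    have htpos : 0 < t := hE.trans ht
    have htΩ : ((t, 0) : ℝ × ℝ) ∈ OmegaRegion ℓ := axis_mem_omega hℓ htpos
    have hT : Tendsto (fun M' => a1 (t, M') - a1 (E, M')) (𝓝[>] (0:ℝ))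
        (𝓝 (a1 (t, 0) - a1 (E, 0))) :=
      (axis_tendsto hℓ a1 ha1anal htpos).sub (axis_tendsto hℓ a1 ha1anal hE)
    have hgap : Real.sqrt 2 / Real.pi * ((v - u)/2) * ((t - E)/Real.sqrt t)
        ≤ a1 (t, 0) - a1 (E, 0) := by
      apply ge_of_tendsto hT
      filter_upwards [Ioc_mem_nhdsGT_of_mem ⟨le_rfl, lt_min hM₀ hM₀'⟩] with M' hM'
      obtain ⟨hM'0, hM'le⟩ := hM'
      have habs : |M'| ≤ min M₀ M₀' := by rw [abs_of_pos hM'0]; exact hM'le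
      have hVmM' : Vm ℓ M' < E := hVm' M' (habs.trans (min_le_right _ _))
      have hEΩ : ((E, M') : ℝ × ℝ) ∈ OmegaRegion ℓ := by
        rw [omega_iff hℓ]; exact ⟨hE, hVmM'⟩
      have htΩ' : ((t, M') : ℝ × ℝ) ∈ OmegaRegion ℓ := by
        rw [omega_iff hℓ]; exact ⟨htpos, hVmM'.trans ht⟩
      rw [ha1pos _ hEΩ hM'0, ha1pos _ htΩ' hM'0]
      have := ra_gap hℓ hE (ne_of_gt hM'0) hVmM' ht hu huv.le
        (fun r hr => by linarith [hw M' (habs.trans (min_le_left _ _)) r hr])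
      calc Real.sqrt 2 / Real.pi * ((v - u)/2) * ((t - E)/Real.sqrt t)
          = Real.sqrt 2 / Real.pi * ((v - u) * ((t - E)/(2*Real.sqrt t))) := by ring
        _ ≤ radialAction ℓ t M' - radialAction ℓ E M' := by linarith
    linarith
  · obtain ⟨u, v, c, hu, huv, hc, hw⟩ := window_point hℓ hE hM hVm
    refine ⟨Real.sqrt 2 / Real.pi * ((v - u)/2), by
      have : 0 < v - u := by linarith
      positivity, ?_⟩
    intro t ht
    have htpos : 0 < t := hE.trans ht
    have htΩ : ((t, M) : ℝ × ℝ) ∈ OmegaRegion ℓ := by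
      rw [omega_iff hℓ]; exact ⟨htpos, hVm.trans ht⟩
    rw [a1_eq hℓ a1 ha1pos ha1neg hp hM, a1_eq hℓ a1 ha1pos ha1neg htΩ hM]
    have := ra_gap hℓ hE hM hVm ht hu huv.le (fun r hr => by linarith [hw r hr])
    calc radialAction ℓ E M + max 0 (-M)
          + Real.sqrt 2 / Real.pi * ((v - u)/2) * ((t - E)/Real.sqrt t)
        = radialAction ℓ E M + Real.sqrt 2 / Real.pi * ((v - u) * ((t - E)/(2*Real.sqrt t)))
          + max 0 (-M) := by ring
      _ ≤ radialAction ℓ t M + max 0 (-M) := by linarith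

include ha1anal ha1pos ha1neg in
/-- strict monotonicity in the energy. -/
lemma a1_strictMono (hp : (E, M) ∈ OmegaRegion ℓ) (ht : E < t) : a1 (E, M) < a1 (t, M) := by
  obtain ⟨w, hwpos, hgap⟩ := a1_gap_aux hℓ a1 ha1anal ha1pos ha1neg hp
  have h1 := hgap t ht
  have htpos : 0 < t := ((omega_iff hℓ _).mp hp).1.trans ht
  have h2 : 0 < w * ((t - E)/Real.sqrt t) := by
    have h3 : 0 < Real.sqrt t := Real.sqrt_pos.mpr htpos
    have h4 : 0 < t - E := by linarith
    positivity
  linarith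

include ha1anal ha1pos ha1neg in
/-- injectivity of the action map on `Ω`. -/
lemma gmap_injOn : Set.InjOn (gmap a1) (OmegaRegion ℓ) := by
  rintro ⟨E, M⟩ hp ⟨E', M'⟩ hq hpq
  have hM : M = M' := congrArg Prod.snd hpq
  subst hM
  have ha : a1 (E, M) = a1 (E', M) := congrArg Prod.fst hpq
  rcases lt_trichotomy E E' with h | h | h
  · exact absurd ha (ne_of_lt (a1_strictMono hℓ a1 ha1anal ha1pos ha1neg hp h))
  · rw [h]
  · exact absurd ha.symm (ne_of_lt (a1_strictMono hℓ a1 ha1anal ha1pos ha1neg hq h))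

include ha1anal ha1pos ha1neg in
/-- positive lower bound for the energy-derivative of `a1`. -/
lemma a1_deriv_pos (hp : (E, M) ∈ OmegaRegion ℓ) :
    0 < (fderiv ℝ a1 (E, M)) (1, 0) := by
  have hE : 0 < E := ((omega_iff hℓ _).mp hp).1
  obtain ⟨w, hwpos, hgap⟩ := a1_gap_aux hℓ a1 ha1anal ha1pos ha1neg hp
  set κ : ℝ := w / Real.sqrt (E + 1) with hκ
  have hκpos : 0 < κ := by rw [hκ]; positivity
  have hdiff : DifferentiableAt ℝ a1 (E, M) := (ha1anal _ hp).differentiableAt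
  have hcurve : HasDerivAt (fun s : ℝ => ((s, M) : ℝ × ℝ)) ((1:ℝ), (0:ℝ)) E :=
    (hasDerivAt_id E).prodMk (hasDerivAt_const E M)
  have hφ : HasDerivAt (fun s : ℝ => a1 (s, M)) ((fderiv ℝ a1 (E, M)) (1, 0)) E :=
    hdiff.hasFDerivAt.comp_hasDerivAt E hcurve
  have hslope : Tendsto (slope (fun s : ℝ => a1 (s, M)) E) (𝓝[>] E)
      (𝓝 ((fderiv ℝ a1 (E, M)) (1, 0))) :=
    (hasDerivAt_iff_tendsto_slope.mp hφ).mono_left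
      (nhdsWithin_mono E (fun x hx => ne_of_gt hx))
  have hlb : κ ≤ (fderiv ℝ a1 (E, M)) (1, 0) := by
    apply ge_of_tendsto hslope
    filter_upwards [Ioc_mem_nhdsGT_of_mem ⟨le_rfl, (by linarith : E < E + 1)⟩] with t ht
    obtain ⟨ht1, ht2⟩ := ht
    have h1 := hgap t ht1
    have htE : 0 < t - E := by linarith
    have hst : Real.sqrt t ≤ Real.sqrt (E + 1) := Real.sqrt_le_sqrt (by linarith)
    have hstpos : 0 < Real.sqrt t := Real.sqrt_pos.mpr (by linarith)
    rw [slope_def_field]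
    have h2 : κ * (t - E) ≤ a1 (t, M) - a1 (E, M) := by
      have h3 : κ * (t - E) ≤ w * ((t - E)/Real.sqrt t) := by
        rw [hκ]
        rw [div_mul_eq_mul_div, mul_div_assoc]
        apply mul_le_mul_of_nonneg_left _ hwpos.le
        rw [div_le_div_iff₀ (by positivity) hstpos]
        calc (t - E) * Real.sqrt t ≤ (t - E) * Real.sqrt (E+1) :=
              mul_le_mul_of_nonneg_left hst htE.le
          _ ≤ (t - E) * Real.sqrt (E+1) := le_rfl
      linarith
    rw [le_div_iff₀ htE]
    linarith
  linarith

end main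

end AHO


namespace AHO

open Real Set intervalIntegral MeasureTheory Pointwise Filter Topology

section main2

variable {ℓ : ℕ} {E M t μ : ℝ} (hℓ : 1 ≤ ℓ) (a1 : ℝ × ℝ → ℝ)
  (ha1anal : AnalyticOnNhd ℝ a1 (OmegaRegion ℓ))
  (ha1pos : ∀ p ∈ OmegaRegion ℓ, 0 < p.2 → a1 p = radialAction ℓ p.1 p.2)
  (ha1neg : ∀ p ∈ OmegaRegion ℓ, p.2 < 0 → a1 p = radialAction ℓ p.1 p.2 - p.2)

lemma Vm_cont (hℓ : 1 ≤ ℓ) : Continuous (Vm ℓ) := by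
  apply Continuous.mul continuous_const
  exact Continuous.rpow_const continuous_abs (fun x => Or.inr (gamma_pos hℓ).le)

include hℓ ha1anal ha1pos ha1neg in
/-- upper bound for `a1` in terms of the distance to the boundary of `Ω`. -/
lemma a1_upper : ∀ p ∈ OmegaRegion ℓ,
    a1 p ≤ Real.sqrt 2 / Real.pi * ((2*(ℓ:ℝ)*p.1) ^ ((1:ℝ)/(2*(ℓ:ℝ)))
      * Real.sqrt (p.1 - Vm ℓ p.2)) + max 0 (-p.2) := by
  rintro ⟨E, M⟩ hp
  obtain ⟨hE, hVm⟩ := (omega_iff hℓ _).mp hp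
  rcases eq_or_ne M 0 with hM | hM
  · subst hM
    simp only [neg_zero, max_self, add_zero]
    apply le_of_tendsto (axis_tendsto hℓ a1 ha1anal hE)
    obtain ⟨M₀', hM₀', hVm'⟩ := exists_M0 hℓ hE
    filter_upwards [Ioc_mem_nhdsGT_of_mem ⟨le_rfl, hM₀'⟩] with M' hM'
    obtain ⟨hM'0, hM'le⟩ := hM'
    have habs : |M'| ≤ M₀' := by rw [abs_of_pos hM'0]; exact hM'le
    have hVmM' : Vm ℓ M' < E := hVm' M' habs
    have hM'Ω : ((E, M') : ℝ × ℝ) ∈ OmegaRegion ℓ := by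
      rw [omega_iff hℓ]; exact ⟨hE, hVmM'⟩
    rw [ha1pos _ hM'Ω hM'0]
    calc radialAction ℓ E M'
        ≤ Real.sqrt 2 / Real.pi * ((2*(ℓ:ℝ)*E) ^ ((1:ℝ)/(2*(ℓ:ℝ)))
            * Real.sqrt (E - Vm ℓ M')) := ra_upper hℓ hE (ne_of_gt hM'0) hVmM'
      _ ≤ Real.sqrt 2 / Real.pi * ((2*(ℓ:ℝ)*E) ^ ((1:ℝ)/(2*(ℓ:ℝ)))
            * Real.sqrt (E - Vm ℓ 0)) := by
          apply mul_le_mul_of_nonneg_left _ (by positivity)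
          apply mul_le_mul_of_nonneg_left _ (by positivity)
          apply Real.sqrt_le_sqrt
          have h0 : Vm ℓ 0 = 0 := Vm_zero hℓ
          have h1 : 0 ≤ Vm ℓ M' := Vm_nonneg hℓ M'
          linarith
  · rw [a1_eq hℓ a1 ha1pos ha1neg hp hM]
    have := ra_upper hℓ hE hM hVm
    simp only
    linarith

include hℓ ha1anal ha1pos ha1neg in
/-- growth of `a1` at large energies, locally uniformly in `M`. -/
lemma a1_growth (K : ℝ) (hK : 0 < K) : ∀ p ∈ OmegaRegion ℓ, |p.2| ≤ K →
    K^2/2 + 2^(2*ℓ)/(2*(ℓ:ℝ)) + 1 ≤ p.1 →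
    Real.sqrt 2 / Real.pi * Real.sqrt (p.1 - (K^2/2 + 2^(2*ℓ)/(2*(ℓ:ℝ)))) ≤ a1 p := by
  have hl := lpos hℓ
  set C₀ : ℝ := K^2/2 + 2^(2*ℓ)/(2*(ℓ:ℝ)) with hC₀def
  have hC₀ : 0 ≤ C₀ := by rw [hC₀def]; positivity
  rintro ⟨E, M⟩ hp hMK hE1
  obtain ⟨hE, hVm⟩ := (omega_iff hℓ _).mp hp
  simp only at hMK hE1 ⊢
  have hwindow : ∀ M' : ℝ, |M'| ≤ K → ∀ r ∈ Icc (1:ℝ) 2, Vstar ℓ M' r ≤ E - (E - C₀) := by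
    intro M' hM' r hr
    have hr1 : (1:ℝ) ≤ r := hr.1
    have hr2 : r ≤ 2 := hr.2
    have hrpos : 0 < r := by linarith
    have h1 : M'^2/(2*r^2) ≤ K^2/2 := by
      have hM'2 : M'^2 ≤ K^2 := by
        rw [← sq_abs M']
        apply pow_le_pow_left₀ (abs_nonneg M') hM'
      have hr2' : (1:ℝ) ≤ r^2 := by nlinarith
      calc M'^2/(2*r^2) ≤ K^2/(2*r^2) := by
            apply div_le_div_of_nonneg_right hM'2 (by positivity)
        _ ≤ K^2/2 := by
            apply div_le_div_of_nonneg_left (by positivity) (by positivity)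
            nlinarith
    have h2 : r^(2*ℓ)/(2*(ℓ:ℝ)) ≤ 2^(2*ℓ)/(2*(ℓ:ℝ)) := by
      apply div_le_div_of_nonneg_right _ (by positivity)
      exact pow_le_pow_left₀ hrpos.le hr2 _
    unfold Vstar
    rw [hC₀def]
    linarith
  have hcpos : 0 < E - C₀ := by linarith
  have hgoal : ∀ M' : ℝ, M' ≠ 0 → |M'| ≤ K → Vm ℓ M' < E →
      Real.sqrt 2 / Real.pi * Real.sqrt (E - C₀) ≤ radialAction ℓ E M' := by
    intro M' hM'0 hM'K hVmM'
    have := ra_window hℓ hE hM'0 hVmM' (by norm_num : (0:ℝ) < 1) (by norm_num : (1:ℝ) ≤ 2)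
      hcpos (hwindow M' hM'K)
    calc Real.sqrt 2 / Real.pi * Real.sqrt (E - C₀)
        = Real.sqrt 2 / Real.pi * ((2 - 1) * Real.sqrt (E - C₀)) := by ring
      _ ≤ radialAction ℓ E M' := this
  rcases eq_or_ne M 0 with hM | hM
  · subst hM
    apply ge_of_tendsto (axis_tendsto hℓ a1 ha1anal hE)
    obtain ⟨M₀', hM₀', hVm'⟩ := exists_M0 hℓ hE
    filter_upwards [Ioc_mem_nhdsGT_of_mem ⟨le_rfl, lt_min hM₀' hK⟩] with M' hM'
    obtain ⟨hM'0, hM'le⟩ := hM'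
    have habs : |M'| = M' := abs_of_pos hM'0
    have hVmM' : Vm ℓ M' < E := hVm' M' (by rw [habs]; exact hM'le.trans (min_le_left _ _))
    have hM'Ω : ((E, M') : ℝ × ℝ) ∈ OmegaRegion ℓ := by
      rw [omega_iff hℓ]; exact ⟨hE, hVmM'⟩
    rw [ha1pos _ hM'Ω hM'0]
    exact hgoal M' (ne_of_gt hM'0) (by rw [habs]; exact hM'le.trans (min_le_right _ _)) hVmM'
  · rw [a1_eq hℓ a1 ha1pos ha1neg hp hM]
    have h1 := hgoal M hM hMK hVm
    have h2 : 0 ≤ max 0 (-M) := le_max_left _ _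
    linarith

include hℓ ha1pos ha1neg in
/-- scaling of `a1` off the axis. -/
lemma a1_scale_ne (hp : (E, M) ∈ OmegaRegion ℓ) (hM : M ≠ 0) (hμ : 0 < μ) :
    ((μ*E, μ ^ (((ℓ:ℝ)+1)/(2*(ℓ:ℝ))) * M) : ℝ × ℝ) ∈ OmegaRegion ℓ ∧
    a1 (μ*E, μ ^ (((ℓ:ℝ)+1)/(2*(ℓ:ℝ))) * M) = μ ^ (((ℓ:ℝ)+1)/(2*(ℓ:ℝ))) * a1 (E, M) := by
  obtain ⟨hE, hVm⟩ := (omega_iff hℓ _).mp hp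
  have hβpos : (0:ℝ) < μ ^ (((ℓ:ℝ)+1)/(2*(ℓ:ℝ))) := Real.rpow_pos_of_pos hμ _
  have hΩ' : ((μ*E, μ ^ (((ℓ:ℝ)+1)/(2*(ℓ:ℝ))) * M) : ℝ × ℝ) ∈ OmegaRegion ℓ := by
    rw [omega_iff hℓ]
    constructor
    · simp only; positivity
    · show Vm ℓ (μ ^ (((ℓ:ℝ)+1)/(2*(ℓ:ℝ))) * M) < μ * E
      rw [Vm_scale hℓ hμ M]
      exact (mul_lt_mul_iff_right₀ hμ).mpr hVm
  refine ⟨hΩ', ?_⟩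
  have hM' : μ ^ (((ℓ:ℝ)+1)/(2*(ℓ:ℝ))) * M ≠ 0 := mul_ne_zero (ne_of_gt hβpos) hM
  rw [a1_eq hℓ a1 ha1pos ha1neg hΩ' hM', a1_eq hℓ a1 ha1pos ha1neg hp hM,
    ra_scale hℓ hμ hE hM hVm]
  have hmax : max 0 (-(μ ^ (((ℓ:ℝ)+1)/(2*(ℓ:ℝ))) * M)) = μ ^ (((ℓ:ℝ)+1)/(2*(ℓ:ℝ))) * max 0 (-M) := by
    rw [mul_max_of_nonneg _ _ hβpos.le, mul_zero, mul_neg]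
  rw [hmax]
  ring

end main2

end AHO


namespace AHO

open Real Set intervalIntegral MeasureTheory Pointwise Filter Topology

section main3

variable {ℓ : ℕ} {E M t μ : ℝ} (hℓ : 1 ≤ ℓ) (a1 : ℝ × ℝ → ℝ)
  (ha1anal : AnalyticOnNhd ℝ a1 (OmegaRegion ℓ))
  (ha1pos : ∀ p ∈ OmegaRegion ℓ, 0 < p.2 → a1 p = radialAction ℓ p.1 p.2)
  (ha1neg : ∀ p ∈ OmegaRegion ℓ, p.2 < 0 → a1 p = radialAction ℓ p.1 p.2 - p.2)

include hℓ ha1anal ha1pos ha1neg in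
/-- full scaling law for `a1`. -/
lemma a1_scale (hp : (E, M) ∈ OmegaRegion ℓ) (hμ : 0 < μ) :
    ((μ*E, μ ^ (((ℓ:ℝ)+1)/(2*(ℓ:ℝ))) * M) : ℝ × ℝ) ∈ OmegaRegion ℓ ∧
    a1 (μ*E, μ ^ (((ℓ:ℝ)+1)/(2*(ℓ:ℝ))) * M) = μ ^ (((ℓ:ℝ)+1)/(2*(ℓ:ℝ))) * a1 (E, M) := by
  rcases eq_or_ne M 0 with hM | hM
  · subst hM
    obtain ⟨hE, _⟩ := (omega_iff hℓ _).mp hp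
    rw [mul_zero]
    have hμE : 0 < μ * E := by positivity
    refine ⟨axis_mem_omega hℓ hμE, ?_⟩
    obtain ⟨M₀', hM₀', hVm'⟩ := exists_M0 hℓ hE
    have hβpos : (0:ℝ) < μ ^ (((ℓ:ℝ)+1)/(2*(ℓ:ℝ))) := Real.rpow_pos_of_pos hμ _
    have T1 : Tendsto (fun M' => a1 (μ*E, μ ^ (((ℓ:ℝ)+1)/(2*(ℓ:ℝ))) * M')) (𝓝[>] (0:ℝ))
        (𝓝 (a1 (μ*E, 0))) := by
      have hcont : ContinuousAt a1 (μ*E, 0) :=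
        (ha1anal _ (axis_mem_omega hℓ hμE)).continuousAt
      have hcurve : Tendsto (fun M' : ℝ => ((μ*E, μ ^ (((ℓ:ℝ)+1)/(2*(ℓ:ℝ))) * M') : ℝ × ℝ))
          (𝓝[>] (0:ℝ)) (𝓝 (μ*E, 0)) := by
        have : Continuous (fun M' : ℝ => ((μ*E, μ ^ (((ℓ:ℝ)+1)/(2*(ℓ:ℝ))) * M') : ℝ × ℝ)) :=
          continuous_const.prodMk (continuous_const.mul continuous_id)
        have h0 := this.tendsto 0
        rw [mul_zero] at h0
        exact h0.mono_left nhdsWithin_le_nhds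
      exact hcont.tendsto.comp hcurve
    have T2 : Tendsto (fun M' => μ ^ (((ℓ:ℝ)+1)/(2*(ℓ:ℝ))) * a1 (E, M')) (𝓝[>] (0:ℝ))
        (𝓝 (μ ^ (((ℓ:ℝ)+1)/(2*(ℓ:ℝ))) * a1 (E, 0))) :=
      (axis_tendsto hℓ a1 ha1anal hE).const_mul _
    have heq : (fun M' => a1 (μ*E, μ ^ (((ℓ:ℝ)+1)/(2*(ℓ:ℝ))) * M'))
        =ᶠ[𝓝[>] (0:ℝ)] (fun M' => μ ^ (((ℓ:ℝ)+1)/(2*(ℓ:ℝ))) * a1 (E, M')) := by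
      filter_upwards [Ioc_mem_nhdsGT_of_mem ⟨le_rfl, hM₀'⟩] with M' hM'
      obtain ⟨hM'0, hM'le⟩ := hM'
      have hM'Ω : ((E, M') : ℝ × ℝ) ∈ OmegaRegion ℓ := by
        rw [omega_iff hℓ]
        exact ⟨hE, hVm' M' (by rw [abs_of_pos hM'0]; exact hM'le)⟩
      exact (a1_scale_ne hℓ a1 ha1pos ha1neg hM'Ω (ne_of_gt hM'0) hμ).2
    exact tendsto_nhds_unique (T1.congr' heq) T2
  · exact a1_scale_ne hℓ a1 ha1pos ha1neg hp hM hμ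

/-- a continuous linear equivalence with prescribed triangular form. -/
lemma exists_clequiv (D : ℝ × ℝ →L[ℝ] ℝ) (hd : D (1, 0) ≠ 0) :
    ∃ e : (ℝ × ℝ) ≃L[ℝ] (ℝ × ℝ),
      (e : (ℝ × ℝ) →L[ℝ] (ℝ × ℝ)) = D.prod (ContinuousLinearMap.snd ℝ ℝ ℝ) := by
  have hDxy : ∀ x y : ℝ, D (x, y) = x * D (1, 0) + y * D (0, 1) := by
    intro x y
    have hxy : ((x, y) : ℝ × ℝ) = x • ((1:ℝ), (0:ℝ)) + y • ((0:ℝ), (1:ℝ)) := by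
      simp [Prod.ext_iff]
    rw [hxy, map_add, _root_.map_smul, _root_.map_smul, smul_eq_mul, smul_eq_mul]
  set A := D.prod (ContinuousLinearMap.snd ℝ ℝ ℝ) with hA
  have hAapp : ∀ q : ℝ × ℝ, A q = (D q, q.2) := fun q => rfl
  let L : (ℝ × ℝ) ≃ₗ[ℝ] (ℝ × ℝ) :=
    { A.toLinearMap with
      invFun := fun q => ((q.1 - q.2 * D (0, 1)) / D (1, 0), q.2)
      left_inv := by
        rintro ⟨x, y⟩
        show ((D (x, y) - y * D (0, 1)) / D (1, 0), y) = (x, y)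
        rw [hDxy x y]
        field_simp
        rw [add_sub_cancel_right, mul_div_cancel_right₀ _ hd]
      right_inv := by
        rintro ⟨x, y⟩
        show (D ((x - y * D (0, 1)) / D (1, 0), y), y) = (x, y)
        rw [hDxy]
        field_simp
        rw [sub_add_cancel] }
  refine ⟨L.toContinuousLinearEquiv, ?_⟩
  apply ContinuousLinearMap.ext
  intro q
  show L.toContinuousLinearEquiv q = A q
  rw [LinearEquiv.coe_toContinuousLinearEquiv']
  rfl

include hℓ ha1anal ha1pos ha1neg in
/-- inversion property of `hfun`. -/
lemma hfun_gmap (p : ℝ × ℝ) (hp : p ∈ OmegaRegion ℓ) : hfun ℓ a1 (gmap a1 p) = p.1 := by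
  have hex : ∃ a ∈ OmegaRegion ℓ, gmap a1 a = gmap a1 p := ⟨p, hp, rfl⟩
  have h1 : Function.invFunOn (gmap a1) (OmegaRegion ℓ) (gmap a1 p) = p :=
    gmap_injOn hℓ a1 ha1anal ha1pos ha1neg (Function.invFunOn_mem hex) hp
      (Function.invFunOn_eq hex)
  show (Function.invFunOn (gmap a1) (OmegaRegion ℓ) (gmap a1 p)).1 = p.1
  rw [h1]

include hℓ ha1anal ha1pos ha1neg in
/-- local analytic invertibility of the action map. -/
lemma local_pack (p : ℝ × ℝ) (hp : p ∈ OmegaRegion ℓ) :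
    AnalyticAt ℝ (hfun ℓ a1) (gmap a1 p) ∧
    ∃ N : Set (ℝ × ℝ), IsOpen N ∧ gmap a1 p ∈ N ∧ N ⊆ gmap a1 '' (OmegaRegion ℓ) := by
  obtain ⟨E, M⟩ := p
  set D := fderiv ℝ a1 (E, M) with hD
  have hd : D (1, 0) ≠ 0 := ne_of_gt (a1_deriv_pos hℓ a1 ha1anal ha1pos ha1neg hp)
  obtain ⟨e, hecoe⟩ := exists_clequiv D hd
  have hg_an : AnalyticAt ℝ (gmap a1) (E, M) := (ha1anal _ hp).prod analyticAt_snd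
  have hfd : HasFDerivAt (gmap a1) (D.prod (ContinuousLinearMap.snd ℝ ℝ ℝ)) (E, M) :=
    ((ha1anal _ hp).differentiableAt.hasFDerivAt).prodMk hasFDerivAt_snd
  have hfde : fderiv ℝ (gmap a1) (E, M) = (e : (ℝ × ℝ) →L[ℝ] (ℝ × ℝ)) := by
    rw [hfd.fderiv, hecoe]
  have hcd : ContDiffAt ℝ 2 (gmap a1) (E, M) := hg_an.contDiffAt
  have hstrict : HasStrictFDerivAt (gmap a1) (e : (ℝ × ℝ) →L[ℝ] (ℝ × ℝ)) (E, M) := by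
    have h2 := hcd.hasStrictFDerivAt (by norm_num)
    rwa [hfde] at h2
  set Φ := hstrict.toOpenPartialHomeomorph (gmap a1) with hΦdef
  have hcoe : ⇑Φ = gmap a1 := hstrict.toOpenPartialHomeomorph_coe
  have hsrc : ((E, M) : ℝ × ℝ) ∈ Φ.source := hstrict.mem_toOpenPartialHomeomorph_source
  have hΦan : AnalyticAt ℝ Φ (E, M) := by rw [hcoe]; exact hg_an
  have hΦfd : fderiv ℝ Φ (E, M) = (e : (ℝ × ℝ) →L[ℝ] (ℝ × ℝ)) := by rw [hcoe]; exact hfde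
  have hsymm_an : AnalyticAt ℝ Φ.symm (Φ (E, M)) := Φ.analyticAt_symm' hsrc hΦan hΦfd
  have hΦp : Φ (E, M) = gmap a1 (E, M) := by rw [hcoe]
  rw [hΦp] at hsymm_an
  set N := Φ.target ∩ Φ.symm ⁻¹' (Φ.source ∩ OmegaRegion ℓ) with hN
  have hNopen : IsOpen N := Φ.continuousOn_symm.isOpen_inter_preimage Φ.open_target
    (Φ.open_source.inter (omega_open hℓ))
  have hqN : gmap a1 (E, M) ∈ N := by
    rw [← hΦp]
    refine ⟨Φ.map_source hsrc, ?_⟩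
    rw [Set.mem_preimage, Φ.left_inv hsrc]
    exact ⟨hsrc, hp⟩
  have hval : ∀ q' ∈ N, Φ.symm q' ∈ OmegaRegion ℓ ∧ gmap a1 (Φ.symm q') = q' := by
    intro q' hq'
    refine ⟨hq'.2.2, ?_⟩
    rw [← hcoe]
    exact Φ.right_inv hq'.1
  have hsub : N ⊆ gmap a1 '' (OmegaRegion ℓ) := fun q' hq' =>
    ⟨Φ.symm q', (hval q' hq').1, (hval q' hq').2⟩
  have heq : Set.EqOn (fun q' => (Φ.symm q').1) (hfun ℓ a1) N := by
    intro q' hq'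
    obtain ⟨hmem, hgq⟩ := hval q' hq'
    have hex : ∃ a ∈ OmegaRegion ℓ, gmap a1 a = q' := ⟨_, hmem, hgq⟩
    have h1 : Function.invFunOn (gmap a1) (OmegaRegion ℓ) q' = Φ.symm q' :=
      gmap_injOn hℓ a1 ha1anal ha1pos ha1neg (Function.invFunOn_mem hex) hmem
        (by rw [Function.invFunOn_eq hex, hgq])
    show (Φ.symm q').1 = (Function.invFunOn (gmap a1) (OmegaRegion ℓ) q').1
    rw [h1]
  refine ⟨?_, N, hNopen, hqN, hsub⟩
  have hfst_an : AnalyticAt ℝ (fun q' : ℝ × ℝ => (Φ.symm q').1) (gmap a1 (E, M)) :=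
    analyticAt_fst.comp hsymm_an
  exact hfst_an.congr (Filter.eventuallyEq_of_mem (hNopen.mem_nhds hqN) heq)

end main3

end AHO


namespace AHO

open Real Set intervalIntegral MeasureTheory Pointwise Filter Topology

section main4

variable {ℓ : ℕ} {E M t μ : ℝ} (hℓ : 1 ≤ ℓ) (a1 : ℝ × ℝ → ℝ)
  (ha1anal : AnalyticOnNhd ℝ a1 (OmegaRegion ℓ))
  (ha1pos : ∀ p ∈ OmegaRegion ℓ, 0 < p.2 → a1 p = radialAction ℓ p.1 p.2)
  (ha1neg : ∀ p ∈ OmegaRegion ℓ, p.2 < 0 → a1 p = radialAction ℓ p.1 p.2 - p.2)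

include hℓ ha1anal ha1pos ha1neg in
/-- the image of the action map is relatively closed in the open cone. -/
lemma image_closed (q : ℝ × ℝ) (hq : q ∈ Ucone)
    (hql : q ∈ closure (gmap a1 '' OmegaRegion ℓ)) : q ∈ gmap a1 '' OmegaRegion ℓ := by
  have hl := lpos hℓ
  obtain ⟨hq1, hq2⟩ := hq
  rw [mem_closure_iff_seq_limit] at hql
  obtain ⟨u, huT, hulim⟩ := hql
  choose pfun hpΩ hgp using huT
  have hsndeq : ∀ n, (pfun n).2 = (u n).2 := fun n => by rw [← hgp n]; rfl
  have hfsteq : ∀ n, a1 (pfun n) = (u n).1 := fun n => by rw [← hgp n]; rfl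
  have hsnd : Tendsto (fun n => (pfun n).2) atTop (𝓝 q.2) := by
    have h1 : Tendsto (fun n => (u n).2) atTop (𝓝 q.2) := (continuous_snd.tendsto q).comp hulim
    have h2 : (fun n => (pfun n).2) = fun n => (u n).2 := funext hsndeq
    rw [h2]; exact h1
  have ha1t : Tendsto (fun n => a1 (pfun n)) atTop (𝓝 q.1) := by
    have h1 : Tendsto (fun n => (u n).1) atTop (𝓝 q.1) := (continuous_fst.tendsto q).comp hulim
    have h2 : (fun n => a1 (pfun n)) = fun n => (u n).1 := funext hfsteq
    rw [h2]; exact h1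
  set K : ℝ := |q.2| + 1 with hK
  have hKpos : 0 < K := by positivity
  have hKev : ∀ᶠ n in atTop, |(pfun n).2| ≤ K :=
    (hsnd.abs).eventually (eventually_le_nhds (by rw [hK]; linarith))
  set C₀ : ℝ := K^2/2 + 2^(2*ℓ)/(2*(ℓ:ℝ)) with hC₀
  have hC₀nn : 0 ≤ C₀ := by rw [hC₀]; positivity
  set W : ℝ := (q.1 + 1) * (Real.pi / Real.sqrt 2) with hW
  have hWnn : 0 ≤ W := by
    rw [hW]
    have := Real.pi_pos
    positivity
  set B : ℝ := C₀ + 1 + W^2 with hB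
  have ha1ev : ∀ᶠ n in atTop, a1 (pfun n) ≤ q.1 + 1 :=
    ha1t.eventually (eventually_le_nhds (by linarith))
  have hEev : ∀ᶠ n in atTop, (pfun n).1 ≤ B := by
    filter_upwards [hKev, ha1ev] with n h1 h2
    by_contra hBn
    push_neg at hBn
    have hE1 : C₀ + 1 ≤ (pfun n).1 := by nlinarith [sq_nonneg W]
    have hgrow := a1_growth hℓ a1 ha1anal ha1pos ha1neg K hKpos (pfun n) (hpΩ n) h1 hE1
    have hπ : 0 < Real.pi := Real.pi_pos
    have hs2 : 0 < Real.sqrt 2 := by positivity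
    have hs : Real.sqrt ((pfun n).1 - C₀) ≤ W := by
      have h3 := hgrow.trans h2
      rw [div_mul_eq_mul_div, div_le_iff₀ hπ] at h3
      rw [hW, mul_div_assoc']
      rw [le_div_iff₀ hs2]
      calc Real.sqrt ((pfun n).1 - C₀) * Real.sqrt 2
          = Real.sqrt 2 * Real.sqrt ((pfun n).1 - C₀) := by ring
        _ ≤ (q.1 + 1) * Real.pi := h3
    have hsq : (pfun n).1 - C₀ ≤ W^2 := by
      have h0 : (0:ℝ) ≤ (pfun n).1 - C₀ := by linarith
      calc (pfun n).1 - C₀ = (Real.sqrt ((pfun n).1 - C₀))^2 := (Real.sq_sqrt h0).symm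
        _ ≤ W^2 := pow_le_pow_left₀ (Real.sqrt_nonneg _) hs 2
    linarith
  obtain ⟨N₀, hN₀⟩ := eventually_atTop.mp ((hKev.and ha1ev).and hEev)
  have hmemIcc : ∀ k : ℕ, (fun m : ℕ => (pfun (m + N₀)).1) k ∈ Icc (0:ℝ) B := by
    intro k
    have hEpos : 0 < (pfun (k + N₀)).1 := ((omega_iff hℓ _).mp (hpΩ (k + N₀))).1
    exact ⟨hEpos.le, (hN₀ (k + N₀) (Nat.le_add_left _ _)).2⟩
  obtain ⟨Estar, hEstarIcc, φ, hφmono, hφtend⟩ := isCompact_Icc.tendsto_subseq hmemIcc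
  have hidx : Tendsto (fun k => φ k + N₀) atTop atTop :=
    (tendsto_add_atTop_nat N₀).comp hφmono.tendsto_atTop
  have hE' : Tendsto (fun k => (pfun (φ k + N₀)).1) atTop (𝓝 Estar) := hφtend
  have hsnd' : Tendsto (fun k => (pfun (φ k + N₀)).2) atTop (𝓝 q.2) := hsnd.comp hidx
  have hprod : Tendsto (fun k => pfun (φ k + N₀)) atTop (𝓝 (Estar, q.2)) := by
    have := hE'.prodMk_nhds hsnd'
    convert this using 1
  by_cases hstar : ((Estar, q.2) : ℝ × ℝ) ∈ OmegaRegion ℓ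
  · have hcont : ContinuousAt (gmap a1) (Estar, q.2) :=
      ContinuousAt.prodMk (ha1anal _ hstar).continuousAt continuous_snd.continuousAt
    have h1 : Tendsto (fun k => gmap a1 (pfun (φ k + N₀))) atTop (𝓝 (gmap a1 (Estar, q.2))) :=
      hcont.tendsto.comp hprod
    have h2 : Tendsto (fun k => gmap a1 (pfun (φ k + N₀))) atTop (𝓝 q) := by
      have h3 : (fun k => gmap a1 (pfun (φ k + N₀))) = fun k => u (φ k + N₀) :=
        funext fun k => hgp _
      rw [h3]
      exact hulim.comp hidx
    exact ⟨(Estar, q.2), hstar, (tendsto_nhds_unique h2 h1).symm⟩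
  · exfalso
    have hVmlim : Tendsto (fun k => Vm ℓ (pfun (φ k + N₀)).2) atTop (𝓝 (Vm ℓ q.2)) :=
      ((Vm_cont hℓ).tendsto _).comp hsnd'
    have hEVm : Vm ℓ q.2 ≤ Estar :=
      le_of_tendsto_of_tendsto' hVmlim hE'
        (fun k => ((omega_iff hℓ _).mp (hpΩ (φ k + N₀))).2.le)
    have hEeq : Estar = Vm ℓ q.2 := by
      rw [omega_iff hℓ] at hstar
      push_neg at hstar
      rcases le_or_gt Estar 0 with h | h
      · have := Vm_nonneg hℓ q.2
        linarith
      · have := hstar h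
        simp only at this
        linarith
    have hub : ∀ k, a1 (pfun (φ k + N₀))
        ≤ Real.sqrt 2 / Real.pi * ((2*(ℓ:ℝ)*(pfun (φ k + N₀)).1) ^ ((1:ℝ)/(2*(ℓ:ℝ)))
          * Real.sqrt ((pfun (φ k + N₀)).1 - Vm ℓ (pfun (φ k + N₀)).2))
          + max 0 (-(pfun (φ k + N₀)).2) :=
      fun k => a1_upper hℓ a1 ha1anal ha1pos ha1neg _ (hpΩ _)
    have hrpowt : Tendsto (fun k => (2*(ℓ:ℝ)*(pfun (φ k + N₀)).1) ^ ((1:ℝ)/(2*(ℓ:ℝ))))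
        atTop (𝓝 ((2*(ℓ:ℝ)*Estar) ^ ((1:ℝ)/(2*(ℓ:ℝ))))) := by
      apply (Real.continuousAt_rpow_const _ _ (Or.inr (by positivity))).tendsto.comp
      exact hE'.const_mul _
    have hsqrtt : Tendsto (fun k => Real.sqrt ((pfun (φ k + N₀)).1 - Vm ℓ (pfun (φ k + N₀)).2))
        atTop (𝓝 (Real.sqrt (Estar - Vm ℓ q.2))) :=
      (Real.continuous_sqrt.tendsto _).comp (hE'.sub hVmlim)
    have hmaxt : Tendsto (fun k => max 0 (-(pfun (φ k + N₀)).2)) atTop (𝓝 (max 0 (-q.2))) :=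
      ((continuous_const.max continuous_neg).tendsto _).comp hsnd'
    have hRHS : Tendsto (fun k =>
        Real.sqrt 2 / Real.pi * ((2*(ℓ:ℝ)*(pfun (φ k + N₀)).1) ^ ((1:ℝ)/(2*(ℓ:ℝ)))
          * Real.sqrt ((pfun (φ k + N₀)).1 - Vm ℓ (pfun (φ k + N₀)).2))
          + max 0 (-(pfun (φ k + N₀)).2)) atTop
        (𝓝 (Real.sqrt 2 / Real.pi * ((2*(ℓ:ℝ)*Estar) ^ ((1:ℝ)/(2*(ℓ:ℝ)))
          * Real.sqrt (Estar - Vm ℓ q.2)) + max 0 (-q.2))) :=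
      ((tendsto_const_nhds.mul (hrpowt.mul hsqrtt)).add hmaxt)
    have hq1le : q.1 ≤ Real.sqrt 2 / Real.pi * ((2*(ℓ:ℝ)*Estar) ^ ((1:ℝ)/(2*(ℓ:ℝ)))
        * Real.sqrt (Estar - Vm ℓ q.2)) + max 0 (-q.2) :=
      le_of_tendsto_of_tendsto' (ha1t.comp hidx) hRHS hub
    rw [hEeq, sub_self, Real.sqrt_zero, mul_zero, mul_zero, zero_add] at hq1le
    have hlt : max 0 (-q.2) < q.1 := max_lt hq1 hq2
    linarith

include hℓ ha1anal ha1pos ha1neg in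
/-- surjectivity of the action map onto the open cone. -/
lemma gmap_surj : Ucone ⊆ gmap a1 '' (OmegaRegion ℓ) := by
  set T := gmap a1 '' (OmegaRegion ℓ) with hT
  have hTopen : IsOpen T := by
    rw [isOpen_iff_mem_nhds]
    rintro q ⟨p, hp, rfl⟩
    obtain ⟨_, N, hNopen, hqN, hNsub⟩ := local_pack hℓ a1 ha1anal ha1pos ha1neg p hp
    exact Filter.mem_of_superset (hNopen.mem_nhds hqN) hNsub
  intro q hqU
  by_contra hqT
  have hpre : IsPreconnected Ucone := Ucone_convex.isPreconnected
  set V := (closure T)ᶜ with hV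
  have hUsub : Ucone ⊆ T ∪ V := by
    intro x hx
    by_cases hxc : x ∈ closure T
    · exact Or.inl (image_closed hℓ a1 ha1anal ha1pos ha1neg x hx hxc)
    · exact Or.inr hxc
  have hp₁ : ((1:ℝ), (0:ℝ)) ∈ OmegaRegion ℓ := axis_mem_omega hℓ one_pos
  have hTne : (Ucone ∩ T).Nonempty :=
    ⟨gmap a1 (1, 0), gmap_mem_Ucone hℓ a1 ha1anal ha1pos ha1neg _ hp₁,
      Set.mem_image_of_mem _ hp₁⟩
  have hVne : (Ucone ∩ V).Nonempty :=
    ⟨q, hqU, fun hc => hqT (image_closed hℓ a1 ha1anal ha1pos ha1neg q hqU hc)⟩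
  obtain ⟨x, hxU, hxT, hxV⟩ := hpre T V hTopen isClosed_closure.isOpen_compl hUsub hTne hVne
  exact hxV (subset_closure hxT)

end main4

end AHO


/-- The anharmonic oscillator Hamiltonian, written in the action variables `(a₁, a₂)`
(the modified radial action and the angular momentum), is a real analytic function on the
interior of the cone `𝒞`, homogeneous of degree `2ℓ/(ℓ+1)` there; this function `h`
inverts the modified radial action: `h(a₁(E, M), M) = E` on `Ω`. -/
theorem hamiltonian_in_action_variables (ℓ : ℕ) (hℓ : 1 ≤ ℓ)
    (a1 : ℝ × ℝ → ℝ)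
    (ha1anal : AnalyticOnNhd ℝ a1 (OmegaRegion ℓ))
    (ha1pos : ∀ p ∈ OmegaRegion ℓ, 0 < p.2 → a1 p = radialAction ℓ p.1 p.2)
    (ha1neg : ∀ p ∈ OmegaRegion ℓ, p.2 < 0 → a1 p = radialAction ℓ p.1 p.2 - p.2) :
    (∀ p ∈ OmegaRegion ℓ, (a1 p, p.2) ∈ interior actionCone) ∧
    ∃ h : ℝ × ℝ → ℝ,
      AnalyticOnNhd ℝ h (interior actionCone) ∧
      (∀ a ∈ interior actionCone, ∀ lam : ℝ, 0 < lam →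
        h (lam • a) = lam ^ ((2 * (ℓ : ℝ)) / (ℓ + 1)) * h a) ∧
      (∀ p ∈ OmegaRegion ℓ, h (a1 p, p.2) = p.1) := by
  have hint : interior actionCone = AHO.Ucone := AHO.interior_actionCone
  constructor
  · intro p hp
    rw [hint]
    exact AHO.gmap_mem_Ucone hℓ a1 ha1anal ha1pos ha1neg p hp
  · refine ⟨AHO.hfun ℓ a1, ?_, ?_, ?_⟩
    · intro q hq
      rw [hint] at hq
      obtain ⟨p, hp, rfl⟩ := AHO.gmap_surj hℓ a1 ha1anal ha1pos ha1neg hq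
      exact (AHO.local_pack hℓ a1 ha1anal ha1pos ha1neg p hp).1
    · intro a ha lam hlam
      rw [hint] at ha
      obtain ⟨p, hp, rfl⟩ := AHO.gmap_surj hℓ a1 ha1anal ha1pos ha1neg ha
      obtain ⟨E, M⟩ := p
      set μ : ℝ := lam ^ ((2*(ℓ:ℝ))/((ℓ:ℝ)+1)) with hμdef
      have hμpos : 0 < μ := Real.rpow_pos_of_pos hlam _
      have hμβ : μ ^ (((ℓ:ℝ)+1)/(2*(ℓ:ℝ))) = lam := by
        rw [hμdef, ← Real.rpow_mul hlam.le,
          show (2*(ℓ:ℝ))/((ℓ:ℝ)+1) * ((((ℓ:ℝ)+1))/(2*(ℓ:ℝ))) = 1 by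
            rw [mul_comm]; exact AHO.beta_mul_gamma hℓ,
          Real.rpow_one]
      obtain ⟨hΩ', heq⟩ := AHO.a1_scale hℓ a1 ha1anal ha1pos ha1neg hp hμpos
      have hsm : lam • (AHO.gmap a1 (E, M))
          = AHO.gmap a1 (μ*E, μ ^ (((ℓ:ℝ)+1)/(2*(ℓ:ℝ))) * M) := by
        have h1 : lam • (AHO.gmap a1 (E, M)) = (lam * a1 (E, M), lam * M) := by
          simp [AHO.gmap, Prod.smul_mk, smul_eq_mul]
        have h2 : AHO.gmap a1 (μ*E, μ ^ (((ℓ:ℝ)+1)/(2*(ℓ:ℝ))) * M)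
            = (lam * a1 (E, M), lam * M) := by
          unfold AHO.gmap
          rw [Prod.ext_iff]
          constructor
          · show a1 (μ*E, μ ^ (((ℓ:ℝ)+1)/(2*(ℓ:ℝ))) * M) = lam * a1 (E, M)
            rw [heq, hμβ]
          · show μ ^ (((ℓ:ℝ)+1)/(2*(ℓ:ℝ))) * M = lam * M
            rw [hμβ]
        rw [h1, h2]
      rw [hsm, AHO.hfun_gmap hℓ a1 ha1anal ha1pos ha1neg _ hΩ',
        AHO.hfun_gmap hℓ a1 ha1anal ha1pos ha1neg _ hp]
    · intro p hp
      exact AHO.hfun_gmap hℓ a1 ha1anal ha1pos ha1neg p hp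
end
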